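/- Let c > 0 be fixed, let q = q(n) ≥ c·n, and let k = k(n) be a sequence of positive integers with k = o(n^{1/12}). Then with probability tending to 1 as n → ∞, a random n×n puzzle with q jig types satisfies: either all feasible complete assemblies are similar, or there exist at least two non-similar feasible complete assemblies that are k-good. -/

import Mathlib

open Finset Filter

noncomputable section

/-- A piece of the `n × n` puzzle, identified with its cell in the original grid. -/
abbrev Cell (n : ℕ) := Fin n × Fin n

/-- The unit vector in direction `d` (`0` = right, `1` = up, `2` = left, `3` = down). -/
def dirVec (d : ZMod 4) : ℤ × ℤ :=
  if d = 0 then (1, 0) else if d = 1 then (0, 1) else if d = 2 then (-1, 0) else (0, -1)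

/-- The integer coordinates of a cell. -/
def cellZ {n : ℕ} (c : Cell n) : ℤ × ℤ := ((c.1 : ℤ), (c.2 : ℤ))

/-- A carving assigns a jig type (one of `q` possibilities) to each of the four
(cyclically ordered) sides of each of the `n²` pieces. -/
abbrev Carving (n q : ℕ) := Cell n → ZMod 4 → Fin q

/-- A carving is valid if each pair of coincident sides of adjacent pieces of the
original grid receives complementary jig types (`ι` is the complementation involution). -/
def IsValidCarving {n q : ℕ} (ι : Fin q → Fin q) (ω : Carving n q) : Prop :=
  ∀ p p' : Cell n, ∀ d : ZMod 4,
    cellZ p' = cellZ p + dirVec d → ω p' (d + 2) = ι (ω p d)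

open scoped Classical in
/-- The probability of the event `P` for a carving chosen uniformly at random among
all valid carvings. -/
def puzzleProb {n q : ℕ} (ι : Fin q → Fin q) (P : Carving n q → Prop) : ℝ :=
  ((Finset.univ.filter fun ω : Carving n q => IsValidCarving ι ω ∧ P ω).card : ℝ) /
  ((Finset.univ.filter fun ω : Carving n q => IsValidCarving ι ω).card : ℝ)

/-- A complete assembly: a bijective placement of the pieces onto the cells of the
`n × n` grid together with an orientation (`ℤ/4`) for each piece. -/
structure Assembly (n : ℕ) where
  pos : Equiv.Perm (Cell n)
  rot : Cell n → ZMod 4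

/-- The planted assembly keeps every piece in its original position and orientation. -/
def planted (n : ℕ) : Assembly n := ⟨Equiv.refl _, fun _ => 0⟩

/-- A complete assembly is feasible for the carving `ω` if all pairs of abutting sides
carry complementary jig types.  The side of piece `p` facing direction `d` after `p` is
rotated by `A.rot p` quarter turns is its original side `d - A.rot p`. -/
def Assembly.Feasible {n q : ℕ} (ι : Fin q → Fin q) (A : Assembly n) (ω : Carving n q) :
    Prop :=
  ∀ p p' : Cell n, ∀ d : ZMod 4,
    cellZ (A.pos p') = cellZ (A.pos p) + dirVec d →
    ω p' (d + 2 - A.rot p') = ι (ω p (d - A.rot p))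

/-- The carving of the grid obtained by reassembling the pieces according to `A`:
side `d` of the grid cell `c` receives the jig type of the corresponding side of the
piece placed on `c`. -/
def Assembly.carving {n q : ℕ} (A : Assembly n) (ω : Carving n q) : Carving n q :=
  fun c d => ω (A.pos.symm c) (d - A.rot (A.pos.symm c))

/-- Rotation of the grid by 90 degrees. -/
def rotCell {n : ℕ} : Equiv.Perm (Cell n) where
  toFun c := (c.2.rev, c.1)
  invFun c := (c.2, c.1.rev)
  left_inv c := by simp
  right_inv c := by simp

/-- Global rotation of a carving of the grid by 90 degrees. -/
def rotateCarving {n q : ℕ} (ω : Carving n q) : Carving n q :=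
  fun c d => ω (rotCell.symm c) (d - 1)

/-- Two solutions are similar if they differ only by a global rotation of the puzzle,
a permutation of pieces with identical carvings, and rotations of pieces whose carving
is rotation-invariant; equivalently, if they induce the same carving of the grid up to
a global rotation. -/
def PuzzleSimilar {n q : ℕ} (A B : Assembly n) (ω : Carving n q) : Prop :=
  ∃ r : Fin 4, B.carving ω = rotateCarving^[r.val] (A.carving ω)

/-- The planted assembly rotated globally by `r` quarter turns. -/
def rotatedPlanted (n : ℕ) (r : Fin 4) : Assembly n :=
  ⟨rotCell ^ r.val, fun _ => (r.val : ZMod 4)⟩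

/-- The cell `c` belongs to the `k × k` window with lower-left corner `(a, b)`. -/
def inWindow {n : ℕ} (a b k : ℕ) (c : Cell n) : Prop :=
  a ≤ c.1.val ∧ c.1.val < a + k ∧ b ≤ c.2.val ∧ c.2.val < b + k

open scoped Classical in
/-- The number of dual edges of the `k × k` window at `(a, b)` (each dual edge recorded
once, as `(c, c', d)` with `d ∈ {right, up}`) whose abutting jig types, for the carving
induced by the assembly `A`, form the complementary pair `{j, ι j}`. -/
def windowTypeCount {n q : ℕ} (ι : Fin q → Fin q) (A : Assembly n) (ω : Carving n q)
    (a b k : ℕ) (j : Fin q) : ℕ :=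
  (Finset.univ.filter fun x : Cell n × Cell n × Fin 2 =>
    inWindow a b k x.1 ∧ inWindow a b k x.2.1 ∧
    cellZ x.2.1 = cellZ x.1 + dirVec (x.2.2.val : ZMod 4) ∧
    (A.carving ω x.1 (x.2.2.val : ZMod 4) = j ∨
      A.carving ω x.1 (x.2.2.val : ZMod 4) = ι j)).card

open scoped Classical in
/-- The shape multiplicity of the `k × k` window at `(a, b)`: the sum, over unordered
complementary pairs `J = {j, ι j}`, of `⌊(number of dual edges of the window of type J)/2⌋`. -/
def windowSM {n q : ℕ} (ι : Fin q → Fin q) (A : Assembly n) (ω : Carving n q)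
    (a b k : ℕ) : ℕ :=
  ∑ j ∈ Finset.univ.filter (fun j : Fin q => j ≤ ι j),
    windowTypeCount ι A ω a b k j / 2

/-- A feasible complete assembly is `k`-good if every `k × k` window touching the boundary
of the puzzle has shape multiplicity at most `1`, and every other `k × k` window has shape
multiplicity at most `2`. -/
def KGood {n q : ℕ} (ι : Fin q → Fin q) (A : Assembly n) (ω : Carving n q) (k : ℕ) :
    Prop :=
  A.Feasible ι ω ∧
    ∀ a b : ℕ, a + k ≤ n → b + k ≤ n →
      windowSM ι A ω a b k ≤ 2 ∧
      ((a = 0 ∨ b = 0 ∨ a + k = n ∨ b + k = n) → windowSM ι A ω a b k ≤ 1)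

/-- A partial assembly: an injective placement of a subset of the pieces into the square
grid `ℤ²`, together with an orientation for each placed piece. -/
structure PartialAssembly (n : ℕ) where
  pieces : Finset (Cell n)
  pos : Cell n → ℤ × ℤ
  rot : Cell n → ZMod 4
  pos_inj : ∀ p ∈ pieces, ∀ p' ∈ pieces, pos p = pos p' → p = p'

/-- A partial assembly is feasible for `ω` if all pairs of abutting sides carry
complementary jig types. -/
def PartialAssembly.Feasible {n q : ℕ} (ι : Fin q → Fin q) (A : PartialAssembly n)
    (ω : Carving n q) : Prop :=
  ∀ p ∈ A.pieces, ∀ p' ∈ A.pieces, ∀ d : ZMod 4,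
    A.pos p' = A.pos p + dirVec d →
    ω p' (d + 2 - A.rot p') = ι (ω p (d - A.rot p))

open scoped Classical in
/-- The edges of the contour graph `C(A)`: the dual edges of `A` (each recorded once, as
`(p, p', d)` with `d ∈ {right, up}`, `p'` being placed in direction `d` from `p`) whose two
abutting piece sides are not coincident in the planted assembly. -/
def contourEdges {n : ℕ} (A : PartialAssembly n) : Finset (Cell n × Cell n × Fin 2) :=
  Finset.univ.filter fun x =>
    x.1 ∈ A.pieces ∧ x.2.1 ∈ A.pieces ∧
    A.pos x.2.1 = A.pos x.1 + dirVec (x.2.2.val : ZMod 4) ∧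
    ¬ (A.rot x.2.1 = A.rot x.1 ∧
        cellZ x.2.1 = cellZ x.1 + dirVec ((x.2.2.val : ZMod 4) - A.rot x.1))

/-- The piece sides lying across the edges of the contour graph of `A`. -/
def crossingSides {n : ℕ} (A : PartialAssembly n) : Set (Cell n × ZMod 4) :=
  {ps | ∃ x ∈ contourEdges A,
    ps = (x.1, (x.2.2.val : ZMod 4) - A.rot x.1) ∨
    ps = (x.2.1, (x.2.2.val : ZMod 4) + 2 - A.rot x.2.1)}

/-- Two piece sides are coincident in the planted assembly. -/
def CoincidentPlanted {n : ℕ} (ps ps' : Cell n × ZMod 4) : Prop :=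
  cellZ ps'.1 = cellZ ps.1 + dirVec ps.2 ∧ ps'.2 = ps.2 + 2

open scoped Classical in
/-- The shape multiplicity `sm(C(A), ω)` of the contour graph of `A` with respect to `ω`:
the sum, over unordered complementary pairs `J = {j, ι j}`, of
`⌊(number of contour edges of type J)/2⌋`. -/
def contourSM {n q : ℕ} (ι : Fin q → Fin q) (A : PartialAssembly n) (ω : Carving n q) :
    ℕ :=
  ∑ j ∈ Finset.univ.filter (fun j : Fin q => j ≤ ι j),
    ((contourEdges A).filter fun x =>
      ω x.1 ((x.2.2.val : ZMod 4) - A.rot x.1) = j ∨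
      ω x.1 ((x.2.2.val : ZMod 4) - A.rot x.1) = ι j).card / 2

end

noncomputable section Helpers

open Finset

variable {n q : ℕ}

lemma cellZ_inj {a b : Cell n} (h : cellZ a = cellZ b) : a = b := by
  obtain ⟨a1, a2⟩ := a; obtain ⟨b1, b2⟩ := b
  simp only [cellZ, Prod.mk.injEq] at h
  simp only [Prod.mk.injEq, Fin.ext_iff]
  exact ⟨by exact_mod_cast h.1, by exact_mod_cast h.2⟩

lemma dirVec_ne (d : ZMod 4) : dirVec d ≠ 0 := by revert d; decide

lemma dirVec_add_two (d : ZMod 4) : dirVec d + dirVec (d + 2) = 0 := by revert d; decide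

lemma zmod4_add22 (d : ZMod 4) : d + 2 + 2 = d := by revert d; decide

lemma fin2_cast_inj {u v : Fin 2} (h : ((u.val : ZMod 4)) = (v.val : ZMod 4)) : u = v := by
  revert h; revert u v; decide

lemma fin2_ne_add_two (u v : Fin 2) : ((u.val : ZMod 4)) ≠ ((v.val : ZMod 4)) + 2 := by
  revert u v; decide

lemma planted_carving (ω : Carving n q) : (planted n).carving ω = ω := by
  funext c d
  simp [Assembly.carving, planted, sub_zero]

lemma feasible_iff_valid (ι : Fin q → Fin q) (A : Assembly n) (ω : Carving n q) :
    A.Feasible ι ω ↔ IsValidCarving ι (A.carving ω) := by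
  constructor
  · intro h c c' d hd
    have := h (A.pos.symm c) (A.pos.symm c') d (by simpa using hd)
    simpa [Assembly.carving] using this
  · intro h p p' d hd
    have := h (A.pos p) (A.pos p') d (by simpa using hd)
    simpa [Assembly.carving] using this

lemma planted_feasible_iff (ι : Fin q → Fin q) (ω : Carving n q) :
    (planted n).Feasible ι ω ↔ IsValidCarving ι ω := by
  rw [feasible_iff_valid, planted_carving]

def Assembly.comp (A B : Assembly n) : Assembly n :=
  ⟨A.pos.trans B.pos, fun p => A.rot p + B.rot (A.pos p)⟩

lemma comp_carving (A B : Assembly n) (ω : Carving n q) :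
    (A.comp B).carving ω = B.carving (A.carving ω) := by
  funext c d
  simp only [Assembly.carving, Assembly.comp, Equiv.symm_trans_apply,
    Equiv.apply_symm_apply]
  congr 1
  ring

def Assembly.inv (A : Assembly n) : Assembly n :=
  ⟨A.pos.symm, fun x => - A.rot (A.pos.symm x)⟩

lemma inv_carving (A : Assembly n) (ω : Carving n q) :
    (A.inv).carving (A.carving ω) = ω := by
  funext c d
  simp [Assembly.carving, Assembly.inv, Equiv.symm_symm, Equiv.symm_apply_apply,
    sub_neg_eq_add, add_sub_cancel_right]

open scoped Classical in
noncomputable def Reach (ι : Fin q → Fin q) (ω : Carving n q) : Finset (Carving n q) :=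
  Finset.univ.filter fun ω' => ∃ A : Assembly n, A.Feasible ι ω ∧ A.carving ω = ω'

lemma mem_Reach {ι : Fin q → Fin q} {ω ω' : Carving n q} :
    ω' ∈ Reach ι ω ↔ ∃ A : Assembly n, A.Feasible ι ω ∧ A.carving ω = ω' := by
  simp [Reach]

lemma Reach_self {ι : Fin q → Fin q} {ω : Carving n q} (hω : IsValidCarving ι ω) :
    ω ∈ Reach ι ω :=
  mem_Reach.2 ⟨planted n, (planted_feasible_iff ι ω).2 hω, planted_carving ω⟩

lemma Reach_valid {ι : Fin q → Fin q} {ω ω' : Carving n q} (h : ω' ∈ Reach ι ω) :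
    IsValidCarving ι ω' := by
  obtain ⟨A, hA, rfl⟩ := mem_Reach.1 h
  exact (feasible_iff_valid ι A ω).1 hA

lemma Reach_trans {ι : Fin q → Fin q} {ω ω' ω'' : Carving n q}
    (h : ω' ∈ Reach ι ω) (h' : ω'' ∈ Reach ι ω') : ω'' ∈ Reach ι ω := by
  obtain ⟨A, hA, rfl⟩ := mem_Reach.1 h
  obtain ⟨B, hB, rfl⟩ := mem_Reach.1 h'
  refine mem_Reach.2 ⟨A.comp B, ?_, comp_carving A B ω⟩
  rw [feasible_iff_valid, comp_carving]
  exact (feasible_iff_valid ι B _).1 hB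

lemma Reach_symm {ι : Fin q → Fin q} {ω ω' : Carving n q}
    (hω : IsValidCarving ι ω) (h : ω' ∈ Reach ι ω) : ω ∈ Reach ι ω' := by
  obtain ⟨A, hA, rfl⟩ := mem_Reach.1 h
  refine mem_Reach.2 ⟨A.inv, ?_, inv_carving A ω⟩
  rw [feasible_iff_valid, inv_carving]
  exact hω

lemma Reach_eq {ι : Fin q → Fin q} {ω ω' : Carving n q}
    (hω : IsValidCarving ι ω) (h : ω' ∈ Reach ι ω) : Reach ι ω' = Reach ι ω := by
  ext ζ
  exact ⟨fun hz => Reach_trans h hz, fun hz => Reach_trans (Reach_symm hω h) hz⟩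

def req (ω₁ ω₂ : Carving n q) : Prop := ∃ r : Fin 4, ω₂ = rotateCarving^[r.val] ω₁

lemma similar_iff_req (A B : Assembly n) (ω : Carving n q) :
    PuzzleSimilar A B ω ↔ req (A.carving ω) (B.carving ω) := Iff.rfl

end Helpers
noncomputable section ClassCount

open Finset

variable {n q : ℕ}

/-- The planted-window goodness property of a carving. -/
def Wgood (ι : Fin q → Fin q) (k : ℕ) (ω : Carving n q) : Prop :=
  ∀ a b : ℕ, a + k ≤ n → b + k ≤ n →
    windowSM ι (planted n) ω a b k ≤ 2 ∧
    ((a = 0 ∨ b = 0 ∨ a + k = n ∨ b + k = n) → windowSM ι (planted n) ω a b k ≤ 1)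

lemma windowTypeCount_carving (ι : Fin q → Fin q) (A : Assembly n) (ω : Carving n q)
    (a b k : ℕ) (j : Fin q) :
    windowTypeCount ι A ω a b k j = windowTypeCount ι (planted n) (A.carving ω) a b k j := by
  unfold windowTypeCount
  rw [planted_carving]

lemma windowSM_carving (ι : Fin q → Fin q) (A : Assembly n) (ω : Carving n q)
    (a b k : ℕ) :
    windowSM ι A ω a b k = windowSM ι (planted n) (A.carving ω) a b k := by
  unfold windowSM
  exact Finset.sum_congr rfl fun j _ => by rw [windowTypeCount_carving]

lemma kgood_iff (ι : Fin q → Fin q) (A : Assembly n) (ω : Carving n q) (k : ℕ) :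
    KGood ι A ω k ↔ (A.Feasible ι ω ∧ Wgood ι k (A.carving ω)) := by
  unfold KGood Wgood
  refine and_congr Iff.rfl ?_
  refine forall_congr' fun a => forall_congr' fun b => ?_
  refine imp_congr Iff.rfl (imp_congr Iff.rfl ?_)
  rw [windowSM_carving]

/-- The event of interest. -/
def EV (ι : Fin q → Fin q) (k : ℕ) (ω : Carving n q) : Prop :=
  (∀ A B : Assembly n,
      A.Feasible ι ω → B.Feasible ι ω → PuzzleSimilar A B ω) ∨
  (∃ A B : Assembly n,
      A.Feasible ι ω ∧ B.Feasible ι ω ∧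
      KGood ι A ω k ∧ KGood ι B ω k ∧ ¬ PuzzleSimilar A B ω)

lemma EV_iff {ι : Fin q → Fin q} {k : ℕ} {ω : Carving n q} :
    EV ι k ω ↔
      ((∀ ω₁ ∈ Reach ι ω, ∀ ω₂ ∈ Reach ι ω, req ω₁ ω₂) ∨
       (∃ ω₁ ∈ Reach ι ω, ∃ ω₂ ∈ Reach ι ω, Wgood ι k ω₁ ∧ Wgood ι k ω₂ ∧ ¬ req ω₁ ω₂)) := by
  constructor
  · rintro (h | ⟨A, B, hA, hB, kA, kB, hns⟩)
    · left
      rintro ω₁ h₁ ω₂ h₂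
      obtain ⟨A, hA, rfl⟩ := mem_Reach.1 h₁
      obtain ⟨B, hB, rfl⟩ := mem_Reach.1 h₂
      exact h A B hA hB
    · right
      exact ⟨A.carving ω, mem_Reach.2 ⟨A, hA, rfl⟩, B.carving ω, mem_Reach.2 ⟨B, hB, rfl⟩,
        ((kgood_iff ι A ω k).1 kA).2, ((kgood_iff ι B ω k).1 kB).2, hns⟩
  · rintro (h | ⟨ω₁, h₁, ω₂, h₂, w₁, w₂, hnr⟩)
    · left
      intro A B hA hB
      exact h _ (mem_Reach.2 ⟨A, hA, rfl⟩) _ (mem_Reach.2 ⟨B, hB, rfl⟩)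
    · right
      obtain ⟨A, hA, rfl⟩ := mem_Reach.1 h₁
      obtain ⟨B, hB, rfl⟩ := mem_Reach.1 h₂
      exact ⟨A, B, hA, hB, (kgood_iff ι A ω k).2 ⟨hA, w₁⟩, (kgood_iff ι B ω k).2 ⟨hB, w₂⟩, hnr⟩

open scoped Classical in
lemma class_bound {ι : Fin q → Fin q} {k : ℕ} (S : Finset (Carving n q))
    (h1 : ∃ ω₁ ∈ S, ∃ ω₂ ∈ S, ¬ req ω₁ ω₂)
    (h2 : ∀ ω₁ ∈ S, ∀ ω₂ ∈ S, Wgood ι k ω₁ → Wgood ι k ω₂ → req ω₁ ω₂) :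
    S.card ≤ 8 * (S.filter fun ω => ¬ Wgood ι k ω).card := by
  have hsplit := Finset.card_filter_add_card_filter_not
    (s := S) (p := fun ω => Wgood ι k ω)
  have hN : 1 ≤ (S.filter fun ω => ¬ Wgood ι k ω).card := by
    obtain ⟨ω₁, hω₁, ω₂, hω₂, hnr⟩ := h1
    rcases Classical.em (Wgood ι k ω₁) with hw1 | hw1
    · rcases Classical.em (Wgood ι k ω₂) with hw2 | hw2
      · exact absurd (h2 _ hω₁ _ hω₂ hw1 hw2) hnr
      · exact Finset.card_pos.2 ⟨ω₂, Finset.mem_filter.2 ⟨hω₂, hw2⟩⟩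
    · exact Finset.card_pos.2 ⟨ω₁, Finset.mem_filter.2 ⟨hω₁, hw1⟩⟩
  have hD : (S.filter fun ω => Wgood ι k ω).card ≤ 4 := by
    rcases Finset.eq_empty_or_nonempty (S.filter fun ω => Wgood ι k ω) with he | ⟨δ, hδ⟩
    · simp [he]
    · have hsub : (S.filter fun ω => Wgood ι k ω) ⊆
          (Finset.univ : Finset (Fin 4)).image fun r => rotateCarving^[r.val] δ := by
        intro η hη
        have hδ' := Finset.mem_filter.1 hδ
        have hη' := Finset.mem_filter.1 hη
        obtain ⟨r, hr⟩ := h2 _ hδ'.1 _ hη'.1 hδ'.2 hη'.2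
        exact Finset.mem_image.2 ⟨r, Finset.mem_univ r, hr.symm⟩
      calc (S.filter fun ω => Wgood ι k ω).card
          ≤ _ := Finset.card_le_card hsub
        _ ≤ (Finset.univ : Finset (Fin 4)).card := Finset.card_image_le
        _ = 4 := by simp
  omega

open scoped Classical in
lemma cardE_bound (ι : Fin q → Fin q) (k : ℕ) :
    (Finset.univ.filter fun ω : Carving n q => IsValidCarving ι ω ∧ ¬ EV ι k ω).card ≤
      8 * (Finset.univ.filter fun ω : Carving n q => IsValidCarving ι ω ∧ ¬ Wgood ι k ω).card := by
  set s := Finset.univ.filter fun ω : Carving n q => IsValidCarving ι ω ∧ ¬ EV ι k ω with hs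
  rw [Finset.card_eq_sum_card_fiberwise
    (f := Reach ι) (t := s.image (Reach ι)) (fun x hx => Finset.mem_image_of_mem _ hx)]
  have hval : ∀ ω ∈ s, IsValidCarving ι ω := fun ω hω => ((Finset.mem_filter.1 hω).2).1
  have hstep : ∀ S ∈ s.image (Reach ι),
      (s.filter fun ω => Reach ι ω = S).card ≤ 8 * (S.filter fun ω => ¬ Wgood ι k ω).card := by
    intro S hS
    obtain ⟨ω₀, hω₀s, rfl⟩ := Finset.mem_image.1 hS
    have hω₀ := (Finset.mem_filter.1 hω₀s).2
    have hfib : (s.filter fun ω => Reach ι ω = Reach ι ω₀) ⊆ Reach ι ω₀ := by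
      intro ω hω
      have h' := Finset.mem_filter.1 hω
      rw [← h'.2]
      exact Reach_self (hval ω h'.1)
    refine (Finset.card_le_card hfib).trans (class_bound _ ?_ ?_)
    · have hne := hω₀.2
      rw [EV_iff] at hne
      push_neg at hne
      exact hne.1
    · intro ω₁ h₁ ω₂ h₂ w₁ w₂
      have hne := hω₀.2
      rw [EV_iff] at hne
      push_neg at hne
      exact hne.2 ω₁ h₁ ω₂ h₂ w₁ w₂
  calc ∑ S ∈ s.image (Reach ι), (s.filter fun ω => Reach ι ω = S).card
      ≤ ∑ S ∈ s.image (Reach ι), 8 * (S.filter fun ω => ¬ Wgood ι k ω).card :=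
        Finset.sum_le_sum hstep
    _ = 8 * ∑ S ∈ s.image (Reach ι), (S.filter fun ω => ¬ Wgood ι k ω).card := by
        rw [Finset.mul_sum]
    _ ≤ 8 * (Finset.univ.filter fun ω : Carving n q =>
          IsValidCarving ι ω ∧ ¬ Wgood ι k ω).card := by
        have hdisj : (↑(s.image (Reach ι)) : Set (Finset (Carving n q))).PairwiseDisjoint
            (fun S => S.filter fun ω => ¬ Wgood ι k ω) := by
          intro S₁ hS₁ S₂ hS₂ hne
          obtain ⟨ω₁, hω₁s, rfl⟩ := Finset.mem_image.1 (Finset.mem_coe.1 hS₁)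
          obtain ⟨ω₂, hω₂s, rfl⟩ := Finset.mem_image.1 (Finset.mem_coe.1 hS₂)
          refine Finset.disjoint_left.2 fun ζ hζ₁ hζ₂ => hne ?_
          have hζ₁' := (Finset.mem_filter.1 hζ₁).1
          have hζ₂' := (Finset.mem_filter.1 hζ₂).1
          rw [← Reach_eq (hval ω₁ hω₁s) hζ₁', ← Reach_eq (hval ω₂ hω₂s) hζ₂']
        have hbu := Finset.card_biUnion hdisj
        have hsub2 : (s.image (Reach ι)).biUnion (fun S => S.filter fun ω => ¬ Wgood ι k ω)
            ⊆ Finset.univ.filter fun ω : Carving n q => IsValidCarving ι ω ∧ ¬ Wgood ι k ω := by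
          intro ζ hζ
          obtain ⟨S, hS, hζS⟩ := Finset.mem_biUnion.1 hζ
          obtain ⟨ω₁, hω₁s, rfl⟩ := Finset.mem_image.1 hS
          have h' := Finset.mem_filter.1 hζS
          exact Finset.mem_filter.2 ⟨Finset.mem_univ _, Reach_valid h'.1, h'.2⟩
        have := (hbu ▸ Finset.card_le_card hsub2)
        omega


end ClassCount
noncomputable section UpdMachinery

open Finset

variable {n q : ℕ}

/-- The jig type on the side of `x.1` facing `x.2.2`. -/
def sideVal (ω : Carving n q) (x : Cell n × Cell n × Fin 2) : Fin q :=
  ω x.1 ((x.2.2.val : ZMod 4))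

/-- Two dual edges carry the same (unordered) type. -/
def MatchE (ι : Fin q → Fin q) (ω : Carving n q) (x y : Cell n × Cell n × Fin 2) : Prop :=
  sideVal ω y = sideVal ω x ∨ sideVal ω y = ι (sideVal ω x)

/-- Resample the coincident pair of sides `(c, e)`/`(c', e+2)` to value `v`. -/
def upd (ι : Fin q → Fin q) (ω : Carving n q) (c c' : Cell n) (e : ZMod 4) (v : Fin q) :
    Carving n q :=
  fun p d => if p = c ∧ d = e then v else if p = c' ∧ d = e + 2 then ι v else ω p d

lemma upd_self (ι : Fin q → Fin q) (ω : Carving n q) (c c' : Cell n) (e : ZMod 4)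
    (v : Fin q) : upd ι ω c c' e v c e = v := by
  simp [upd]

lemma upd_other (ι : Fin q → Fin q) (ω : Carving n q) (c c' : Cell n) (e : ZMod 4)
    (v : Fin q) (p : Cell n) (d : ZMod 4)
    (h1 : ¬(p = c ∧ d = e)) (h2 : ¬(p = c' ∧ d = e + 2)) :
    upd ι ω c c' e v p d = ω p d := by
  unfold upd
  rw [if_neg h1, if_neg h2]

lemma upd_valid {ι : Fin q → Fin q} (hι : ι ∘ ι = id) {ω : Carving n q}
    (hω : IsValidCarving ι ω) {c c' : Cell n} {e : ZMod 4}
    (h : cellZ c' = cellZ c + dirVec e) (v : Fin q) :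
    IsValidCarving ι (upd ι ω c c' e v) := by
  have hcc : c' ≠ c := by
    intro hcc
    rw [hcc] at h
    exact dirVec_ne e (left_eq_add.1 h)
  intro p p' d hd
  by_cases h1 : p = c ∧ d = e
  · have hp' : p' = c' := by
      apply cellZ_inj
      rw [hd, h1.1, h1.2, ← h]
    have hL : upd ι ω c c' e v p' (d + 2) = ι v := by
      unfold upd
      rw [if_neg (by rintro ⟨hh, -⟩; exact hcc (hp' ▸ hh)), if_pos ⟨hp', by rw [h1.2]⟩]
    have hR : upd ι ω c c' e v p d = v := by
      unfold upd
      rw [if_pos h1]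
    rw [hL, hR]
  · by_cases h2 : p = c' ∧ d = e + 2
    · have hp' : p' = c := by
        apply cellZ_inj
        rw [hd, h2.1, h2.2, h, add_assoc, dirVec_add_two, add_zero]
      have hd2 : d + 2 = e := by rw [h2.2, zmod4_add22]
      have hL : upd ι ω c c' e v p' (d + 2) = v := by
        unfold upd
        rw [if_pos ⟨hp', hd2⟩]
      have hR : upd ι ω c c' e v p d = ι v := by
        unfold upd
        rw [if_neg (by rintro ⟨hh, -⟩; exact hcc (h2.1.symm.trans hh)), if_pos h2]
      rw [hL, hR]
      exact (congrFun hι v).symm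
    · have hA : ¬(p' = c ∧ d + 2 = e) := by
        rintro ⟨hpc, hde⟩
        apply h2
        have hde' : d = e + 2 := by rw [← hde, zmod4_add22]
        refine ⟨?_, hde'⟩
        apply cellZ_inj
        rw [h, ← hde, ← hpc, hd, add_assoc, dirVec_add_two, add_zero]
      have hB : ¬(p' = c' ∧ d + 2 = e + 2) := by
        rintro ⟨hpc, hde⟩
        apply h1
        have hde' : d = e := by
          have := congrArg (fun z => z + 2) hde
          simpa [zmod4_add22] using this
        refine ⟨?_, hde'⟩
        apply cellZ_inj
        have h3 : cellZ c' = cellZ p + dirVec e := by rw [← hde', ← hd, hpc]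
        rw [h] at h3
        exact (add_right_cancel h3).symm
      rw [upd_other ι ω c c' e v p' (d + 2) hA hB, upd_other ι ω c c' e v p d h1 h2]
      exact hω p p' d hd

lemma sideVal_upd (ι : Fin q → Fin q) (ω : Carving n q) (v : Fin q)
    (w z : Cell n × Cell n × Fin 2) (hwz : ¬(w.1 = z.1 ∧ w.2.2 = z.2.2)) :
    sideVal (upd ι ω z.1 z.2.1 ((z.2.2.val : ZMod 4)) v) w = sideVal ω w := by
  unfold sideVal
  apply upd_other
  · rintro ⟨hh1, hh2⟩
    exact hwz ⟨hh1, fin2_cast_inj hh2⟩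
  · rintro ⟨-, hh2⟩
    exact fin2_ne_add_two w.2.2 z.2.2 hh2

lemma matchE_upd (ι : Fin q → Fin q) (ω : Carving n q) (v : Fin q)
    (x y z : Cell n × Cell n × Fin 2)
    (hx : ¬(x.1 = z.1 ∧ x.2.2 = z.2.2)) (hy : ¬(y.1 = z.1 ∧ y.2.2 = z.2.2)) :
    MatchE ι (upd ι ω z.1 z.2.1 ((z.2.2.val : ZMod 4)) v) x y ↔ MatchE ι ω x y := by
  unfold MatchE
  rw [sideVal_upd ι ω v x z hx, sideVal_upd ι ω v y z hy]

lemma pair_bound {ι : Fin q → Fin q} (hι : ι ∘ ι = id)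
    (x y : Cell n × Cell n × Fin 2)
    (hy : cellZ y.2.1 = cellZ y.1 + dirVec (y.2.2.val : ZMod 4))
    (hxy : ¬(x.1 = y.1 ∧ x.2.2 = y.2.2))
    (P : Carving n q → Prop)
    (hP : ∀ ω v, P (upd ι ω y.1 y.2.1 ((y.2.2.val : ZMod 4)) v) ↔ P ω)
    (s1 s2 : Finset (Carving n q))
    (hs1 : ∀ ω, ω ∈ s1 ↔ (IsValidCarving ι ω ∧ P ω ∧ MatchE ι ω x y))
    (hs2 : ∀ ω, ω ∈ s2 ↔ (IsValidCarving ι ω ∧ P ω)) :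
    q * s1.card ≤ 2 * s2.card := by
  set e : ZMod 4 := ((y.2.2.val : ZMod 4)) with he
  have key : (s1 ×ˢ (Finset.univ : Finset (Fin q))).card ≤
      (s2 ×ˢ (Finset.univ : Finset (Fin 2))).card := by
    apply Finset.card_le_card_of_injOn (fun z =>
      (upd ι z.1 y.1 y.2.1 e z.2,
        if sideVal z.1 y = sideVal z.1 x then (0 : Fin 2) else 1))
    · rintro ⟨ω, v⟩ hz
      rw [Finset.mem_coe, Finset.mem_product] at hz
      obtain ⟨hv, hp, -⟩ := (hs1 _).1 hz.1
      refine Finset.mem_coe.2 (Finset.mem_product.2 ⟨(hs2 _).2 ⟨?_, ?_⟩, Finset.mem_univ _⟩)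
      · exact upd_valid hι hv hy v
      · exact (hP ω v).2 hp
    · rintro ⟨ω, v⟩ hz ⟨ω', v'⟩ hz' heq
      rw [Finset.mem_coe, Finset.mem_product] at hz hz'
      obtain ⟨hv0, hp0, hm0⟩ := (hs1 _).1 hz.1
      obtain ⟨hv0', hp0', hm0'⟩ := (hs1 _).1 hz'.1
      have hv : IsValidCarving ι ω := hv0
      have hv' : IsValidCarving ι ω' := hv0'
      have hm : MatchE ι ω x y := hm0
      have hm' : MatchE ι ω' x y := hm0'
      have hU : upd ι ω y.1 y.2.1 e v = upd ι ω' y.1 y.2.1 e v' :=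
        congrArg Prod.fst heq
      have hbit : (if sideVal ω y = sideVal ω x then (0 : Fin 2) else 1)
          = (if sideVal ω' y = sideVal ω' x then (0 : Fin 2) else 1) :=
        congrArg Prod.snd heq
      have hvv : v = v' := by
        have := congrFun (congrFun hU y.1) e
        rwa [upd_self, upd_self] at this
      have hxne1 : ¬(x.1 = y.1 ∧ (x.2.2.val : ZMod 4) = e) := by
        rintro ⟨hh1, hh2⟩
        exact hxy ⟨hh1, fin2_cast_inj hh2⟩
      have hxne2 : ¬(x.1 = y.2.1 ∧ (x.2.2.val : ZMod 4) = e + 2) := by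
        rintro ⟨-, hh2⟩
        exact fin2_ne_add_two x.2.2 y.2.2 hh2
      have hx_eq : sideVal ω x = sideVal ω' x := by
        have := congrFun (congrFun hU x.1) ((x.2.2.val : ZMod 4))
        rwa [upd_other ι ω y.1 y.2.1 e v _ _ hxne1 hxne2,
          upd_other ι ω' y.1 y.2.1 e v' _ _ hxne1 hxne2] at this
      have hyside : sideVal ω y = sideVal ω' y := by
        by_cases hb : sideVal ω y = sideVal ω x
        · have hb' : sideVal ω' y = sideVal ω' x := by
            by_contra hb'
            rw [if_pos hb, if_neg hb'] at hbit
            exact absurd hbit (by decide)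
          rw [hb, hb', hx_eq]
        · have hb' : ¬ sideVal ω' y = sideVal ω' x := by
            intro hb'
            rw [if_neg hb, if_pos hb'] at hbit
            exact absurd hbit (by decide)
          rcases hm with hm1 | hm2
          · exact absurd hm1 hb
          rcases hm' with hm1' | hm2'
          · exact absurd hm1' hb'
          rw [hm2, hm2', hx_eq]
      have hωeq : ω = ω' := by
        funext p d
        by_cases h1 : p = y.1 ∧ d = e
        · obtain ⟨rfl, rfl⟩ := h1
          exact hyside
        · by_cases h2 : p = y.2.1 ∧ d = e + 2
          · rw [h2.1, h2.2, hv y.1 y.2.1 e hy, hv' y.1 y.2.1 e hy]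
            exact congrArg ι hyside
          · have := congrFun (congrFun hU p) d
            rwa [upd_other ι ω y.1 y.2.1 e v p d h1 h2,
              upd_other ι ω' y.1 y.2.1 e v' p d h1 h2] at this
      exact Prod.ext hωeq hvv
  rw [Finset.card_product, Finset.card_product] at key
  simp only [Finset.card_univ, Fintype.card_fin] at key
  calc q * s1.card = s1.card * q := mul_comm _ _
    _ ≤ s2.card * 2 := key
    _ = 2 * s2.card := mul_comm _ _

end UpdMachinery
section Extract

open Finset

lemma extract_pairs {β γ : Type*} [DecidableEq β] [DecidableEq γ] :
    ∀ (s : ℕ) (E : Finset β) (f : β → γ),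
      s ≤ ∑ j ∈ E.image f, (E.filter fun z => f z = j).card / 2 →
      ∃ g : Fin s → β × β,
        (∀ i, (g i).1 ∈ E ∧ (g i).2 ∈ E ∧ f (g i).1 = f (g i).2 ∧ (g i).1 ≠ (g i).2) ∧
        (∀ i j, i ≠ j →
          (g i).1 ≠ (g j).1 ∧ (g i).1 ≠ (g j).2 ∧ (g i).2 ≠ (g j).1 ∧ (g i).2 ≠ (g j).2) := by
  intro s
  induction s with
  | zero =>
      intro E f _
      exact ⟨fun i => i.elim0, fun i => i.elim0, fun i => i.elim0⟩
  | succ m ih =>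
      intro E f hsum
      have hex : ∃ j ∈ E.image f, 2 ≤ (E.filter fun z => f z = j).card := by
        by_contra hno
        push_neg at hno
        have hz : ∀ j ∈ E.image f, (E.filter fun z => f z = j).card / 2 = 0 := by
          intro j hj
          have := hno j hj
          omega
        rw [Finset.sum_congr rfl hz] at hsum
        simp at hsum
      obtain ⟨j₀, hj₀, hc⟩ := hex
      obtain ⟨x, hx, y, hy, hxy⟩ := Finset.one_lt_card.1 (by omega :
        1 < (E.filter fun z => f z = j₀).card)
      have hxE : x ∈ E := (Finset.mem_filter.1 hx).1
      have hfx : f x = j₀ := (Finset.mem_filter.1 hx).2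
      have hyE : y ∈ E := (Finset.mem_filter.1 hy).1
      have hfy : f y = j₀ := (Finset.mem_filter.1 hy).2
      set E' := (E.erase x).erase y with hE'
      have hE'sub : E' ⊆ E :=
        (Finset.erase_subset _ _).trans (Finset.erase_subset _ _)
      have hmemE' : ∀ z, z ∈ E' ↔ (z ∈ E ∧ z ≠ x ∧ z ≠ y) := by
        intro z
        simp only [hE', Finset.mem_erase]
        tauto
      have hsum' : m ≤ ∑ j ∈ E'.image f, (E'.filter fun z => f z = j).card / 2 := by
        have himg : E'.image f ⊆ E.image f := Finset.image_subset_image hE'sub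
        have hzero : ∀ j ∈ E.image f, j ∉ E'.image f →
            (E'.filter fun z => f z = j).card / 2 = 0 := by
          intro j _ hj
          have hempty : E'.filter (fun z => f z = j) = ∅ := by
            rw [Finset.filter_eq_empty_iff]
            intro z hz hfz
            exact hj (Finset.mem_image.2 ⟨z, hz, hfz⟩)
          simp [hempty]
        rw [Finset.sum_subset himg hzero]
        have hsplit : ∀ j ∈ (E.image f).erase j₀,
            (E'.filter fun z => f z = j) = (E.filter fun z => f z = j) := by
          intro j hj
          have hjne := Finset.ne_of_mem_erase hj
          ext z
          simp only [Finset.mem_filter, hmemE']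
          constructor
          · rintro ⟨⟨h1, -, -⟩, h2⟩
            exact ⟨h1, h2⟩
          · rintro ⟨h1, h2⟩
            refine ⟨⟨h1, ?_, ?_⟩, h2⟩
            · rintro rfl
              exact hjne (h2 ▸ hfx ▸ rfl)
            · rintro rfl
              exact hjne (h2 ▸ hfy ▸ rfl)
        have hj₀card : (E'.filter fun z => f z = j₀).card
            = (E.filter fun z => f z = j₀).card - 2 := by
          have hfe : E'.filter (fun z => f z = j₀)
              = ((E.filter fun z => f z = j₀).erase x).erase y := by
            rw [hE', Finset.filter_erase, Finset.filter_erase]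
          rw [hfe, Finset.card_erase_of_mem
              (Finset.mem_erase.2 ⟨hxy.symm, hy⟩),
            Finset.card_erase_of_mem hx]
          omega
        rw [← Finset.sum_erase_add _ _ hj₀,
          Finset.sum_congr rfl (fun j hj => by rw [hsplit j hj]), hj₀card]
        have hge : m + 1 ≤ (∑ j ∈ (E.image f).erase j₀,
            (E.filter fun z => f z = j).card / 2)
            + (E.filter fun z => f z = j₀).card / 2 := by
          rw [Finset.sum_erase_add _ _ hj₀]
          exact hsum
        omega
      obtain ⟨g', hg'1, hg'2⟩ := ih E' f hsum'
      have hmemne : ∀ z, z ∈ E' → z ≠ x ∧ z ≠ y := fun z hz => ((hmemE' z).1 hz).2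
      refine ⟨Fin.cons (x, y) g', ?_, ?_⟩
      · intro i
        rcases Fin.eq_zero_or_eq_succ i with rfl | ⟨i', rfl⟩
        · simp only [Fin.cons_zero]
          exact ⟨hxE, hyE, by rw [hfx, hfy], hxy⟩
        · simp only [Fin.cons_succ]
          obtain ⟨h1, h2, h3, h4⟩ := hg'1 i'
          exact ⟨hE'sub h1, hE'sub h2, h3, h4⟩
      · intro i j hij
        rcases Fin.eq_zero_or_eq_succ i with rfl | ⟨i', rfl⟩
        · rcases Fin.eq_zero_or_eq_succ j with rfl | ⟨j', rfl⟩
          · exact absurd rfl hij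
          · simp only [Fin.cons_zero, Fin.cons_succ]
            obtain ⟨h1, h2, -, -⟩ := hg'1 j'
            exact ⟨(hmemne _ h1).1.symm, (hmemne _ h2).1.symm,
              (hmemne _ h1).2.symm, (hmemne _ h2).2.symm⟩
        · rcases Fin.eq_zero_or_eq_succ j with rfl | ⟨j', rfl⟩
          · simp only [Fin.cons_zero, Fin.cons_succ]
            obtain ⟨h1, h2, -, -⟩ := hg'1 i'
            exact ⟨(hmemne _ h1).1, (hmemne _ h1).2, (hmemne _ h2).1, (hmemne _ h2).2⟩
          · simp only [Fin.cons_succ]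
            exact hg'2 i' j' (fun hh => hij (by rw [hh]))
end Extract
noncomputable section WindowCount

open Finset
open scoped Classical

variable {n q : ℕ}

lemma invol {q' : ℕ} {ι : Fin q' → Fin q'} (hι : ι ∘ ι = id) (w : Fin q') :
    ι (ι w) = w := congrFun hι w

def winEdges (n : ℕ) (a b k : ℕ) : Finset (Cell n × Cell n × Fin 2) :=
  Finset.univ.filter fun x =>
    inWindow a b k x.1 ∧ inWindow a b k x.2.1 ∧
    cellZ x.2.1 = cellZ x.1 + dirVec (x.2.2.val : ZMod 4)

lemma winEdges_adj {a b k : ℕ} {z : Cell n × Cell n × Fin 2}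
    (hz : z ∈ winEdges n a b k) :
    cellZ z.2.1 = cellZ z.1 + dirVec (z.2.2.val : ZMod 4) :=
  (Finset.mem_filter.1 hz).2.2.2

lemma side_ne_of_mem {a b k : ℕ} {z w : Cell n × Cell n × Fin 2}
    (hz : z ∈ winEdges n a b k) (hw : w ∈ winEdges n a b k) (hne : z ≠ w) :
    ¬(z.1 = w.1 ∧ z.2.2 = w.2.2) := by
  rintro ⟨h1, h2⟩
  apply hne
  have hmid : z.2.1 = w.2.1 := by
    apply cellZ_inj
    rw [winEdges_adj hz, winEdges_adj hw, h1, h2]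
  exact Prod.ext h1 (Prod.ext hmid h2)

def typeRep (ι : Fin q → Fin q) (v : Fin q) : Fin q := min v (ι v)

lemma typeRep_self_le {ι : Fin q → Fin q} (hι : ι ∘ ι = id) (v : Fin q) :
    typeRep ι v ≤ ι (typeRep ι v) := by
  rcases le_total v (ι v) with h | h
  · rw [typeRep, min_eq_left h]
    exact h
  · rw [typeRep, min_eq_right h, invol hι v]
    exact h

lemma typeRep_eq_iff {ι : Fin q → Fin q} (hι : ι ∘ ι = id) {j v : Fin q} (hj : j ≤ ι j) :
    typeRep ι v = j ↔ (v = j ∨ v = ι j) := by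
  constructor
  · intro h
    rcases min_cases v (ι v) with ⟨h1, -⟩ | ⟨h1, -⟩
    · left
      rw [← h, typeRep, h1]
    · right
      rw [← h, typeRep, h1]
      exact (invol hι v).symm
  · rintro (rfl | rfl)
    · exact min_eq_left hj
    · rw [typeRep, invol hι j]
      exact min_eq_right hj

lemma typeRep_match {ι : Fin q → Fin q} (hι : ι ∘ ι = id) {v w : Fin q}
    (h : typeRep ι w = typeRep ι v) : w = v ∨ w = ι v := by
  rcases min_cases w (ι w) with ⟨h1, -⟩ | ⟨h1, -⟩ <;>
    rcases min_cases v (ι v) with ⟨h2, -⟩ | ⟨h2, -⟩ <;>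
      rw [typeRep, h1, typeRep, h2] at h
  · exact Or.inl h
  · exact Or.inr h
  · exact Or.inr ((invol hι w).symm.trans (congrArg ι h))
  · exact Or.inl ((invol hι w).symm.trans ((congrArg ι h).trans (invol hι v)))

lemma windowSM_planted_fibers {ι : Fin q → Fin q} (hι : ι ∘ ι = id) (ω : Carving n q)
    (a b k : ℕ) :
    windowSM ι (planted n) ω a b k =
      ∑ j ∈ (winEdges n a b k).image (fun x => typeRep ι (sideVal ω x)),
        ((winEdges n a b k).filter fun x => typeRep ι (sideVal ω x) = j).card / 2 := by
  have hperj : ∀ j : Fin q, j ≤ ι j →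
      windowTypeCount ι (planted n) ω a b k j
        = ((winEdges n a b k).filter fun x => typeRep ι (sideVal ω x) = j).card := by
    intro j hj
    unfold windowTypeCount winEdges
    rw [planted_carving, Finset.filter_filter]
    apply congrArg
    apply Finset.filter_congr
    intro x _
    rw [typeRep_eq_iff hι hj]
    simp only [sideVal]
    tauto
  unfold windowSM
  rw [Finset.sum_congr rfl (fun j hj => by
    rw [hperj j (Finset.mem_filter.1 hj).2])]
  refine (Finset.sum_subset ?_ ?_).symm
  · intro j hj
    obtain ⟨x, -, rfl⟩ := Finset.mem_image.1 hj
    exact Finset.mem_filter.2 ⟨Finset.mem_univ _, typeRep_self_le hι _⟩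
  · intro j _ hj
    have hempty : (winEdges n a b k).filter (fun x => typeRep ι (sideVal ω x) = j) = ∅ := by
      rw [Finset.filter_eq_empty_iff]
      intro x hx hfx
      exact hj (Finset.mem_image.2 ⟨x, hx, hfx⟩)
    simp [hempty]

end WindowCount
noncomputable section TupleCount

open Finset
open scoped Classical

variable {n q : ℕ}

lemma triple_bound {ι : Fin q → Fin q} (hι : ι ∘ ι = id)
    (x₁ y₁ x₂ y₂ x₃ y₃ : Cell n × Cell n × Fin 2)
    (hy1 : cellZ y₁.2.1 = cellZ y₁.1 + dirVec (y₁.2.2.val : ZMod 4))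
    (hy2 : cellZ y₂.2.1 = cellZ y₂.1 + dirVec (y₂.2.2.val : ZMod 4))
    (hy3 : cellZ y₃.2.1 = cellZ y₃.1 + dirVec (y₃.2.2.val : ZMod 4))
    (s11 : ¬(x₁.1 = y₁.1 ∧ x₁.2.2 = y₁.2.2))
    (s12 : ¬(x₁.1 = y₂.1 ∧ x₁.2.2 = y₂.2.2))
    (sy12 : ¬(y₁.1 = y₂.1 ∧ y₁.2.2 = y₂.2.2))
    (s22 : ¬(x₂.1 = y₂.1 ∧ x₂.2.2 = y₂.2.2))
    (s13 : ¬(x₁.1 = y₃.1 ∧ x₁.2.2 = y₃.2.2))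
    (sy13 : ¬(y₁.1 = y₃.1 ∧ y₁.2.2 = y₃.2.2))
    (s23 : ¬(x₂.1 = y₃.1 ∧ x₂.2.2 = y₃.2.2))
    (sy23 : ¬(y₂.1 = y₃.1 ∧ y₂.2.2 = y₃.2.2))
    (s33 : ¬(x₃.1 = y₃.1 ∧ x₃.2.2 = y₃.2.2))
    (s3 sV : Finset (Carving n q))
    (hs3 : ∀ ω, ω ∈ s3 ↔ (IsValidCarving ι ω ∧
      (MatchE ι ω x₁ y₁ ∧ MatchE ι ω x₂ y₂ ∧ MatchE ι ω x₃ y₃)))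
    (hsV : ∀ ω, ω ∈ sV ↔ IsValidCarving ι ω) :
    q ^ 3 * s3.card ≤ 8 * sV.card := by
  set s2 : Finset (Carving n q) := Finset.univ.filter fun ω =>
    IsValidCarving ι ω ∧ (MatchE ι ω x₁ y₁ ∧ MatchE ι ω x₂ y₂) with hs2def
  set s1 : Finset (Carving n q) := Finset.univ.filter fun ω =>
    IsValidCarving ι ω ∧ MatchE ι ω x₁ y₁ with hs1def
  have hs2 : ∀ ω, ω ∈ s2 ↔ (IsValidCarving ι ω ∧
      (MatchE ι ω x₁ y₁ ∧ MatchE ι ω x₂ y₂)) := by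
    intro ω
    rw [hs2def, Finset.mem_filter]
    exact ⟨fun h => h.2, fun h => ⟨Finset.mem_univ _, h⟩⟩
  have hs1 : ∀ ω, ω ∈ s1 ↔ (IsValidCarving ι ω ∧ MatchE ι ω x₁ y₁) := by
    intro ω
    rw [hs1def, Finset.mem_filter]
    exact ⟨fun h => h.2, fun h => ⟨Finset.mem_univ _, h⟩⟩
  have c3 : q * s3.card ≤ 2 * s2.card := by
    refine pair_bound hι x₃ y₃ hy3 s33
      (fun ω => MatchE ι ω x₁ y₁ ∧ MatchE ι ω x₂ y₂)
      (fun ω v => and_congr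
        (matchE_upd ι ω v x₁ y₁ y₃ s13 sy13)
        (matchE_upd ι ω v x₂ y₂ y₃ s23 sy23)) s3 s2
      (fun ω => (hs3 ω).trans (and_congr_right fun _ => and_assoc.symm)) hs2
  have c2 : q * s2.card ≤ 2 * s1.card := by
    refine pair_bound hι x₂ y₂ hy2 s22
      (fun ω => MatchE ι ω x₁ y₁)
      (fun ω v => matchE_upd ι ω v x₁ y₁ y₂ s12 sy12) s2 s1
      (fun ω => (hs2 ω)) hs1
  have c1 : q * s1.card ≤ 2 * sV.card := by
    refine pair_bound hι x₁ y₁ hy1 s11 (fun _ => True)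
      (fun ω v => Iff.rfl) s1 sV
      (fun ω => (hs1 ω).trans ?_) (fun ω => (hsV ω).trans ?_)
    · constructor
      · rintro ⟨h1, h2⟩
        exact ⟨h1, trivial, h2⟩
      · rintro ⟨h1, -, h2⟩
        exact ⟨h1, h2⟩
    · constructor
      · intro h
        exact ⟨h, trivial⟩
      · rintro ⟨h, -⟩
        exact h
  calc q ^ 3 * s3.card = q * q * (q * s3.card) := by ring
    _ ≤ q * q * (2 * s2.card) := Nat.mul_le_mul_left _ c3
    _ = 2 * q * (q * s2.card) := by ring
    _ ≤ 2 * q * (2 * s1.card) := Nat.mul_le_mul_left _ c2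
    _ = 4 * (q * s1.card) := by ring
    _ ≤ 4 * (2 * sV.card) := Nat.mul_le_mul_left _ c1
    _ = 8 * sV.card := by ring

lemma double_bound {ι : Fin q → Fin q} (hι : ι ∘ ι = id)
    (x₁ y₁ x₂ y₂ : Cell n × Cell n × Fin 2)
    (hy1 : cellZ y₁.2.1 = cellZ y₁.1 + dirVec (y₁.2.2.val : ZMod 4))
    (hy2 : cellZ y₂.2.1 = cellZ y₂.1 + dirVec (y₂.2.2.val : ZMod 4))
    (s11 : ¬(x₁.1 = y₁.1 ∧ x₁.2.2 = y₁.2.2))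
    (s12 : ¬(x₁.1 = y₂.1 ∧ x₁.2.2 = y₂.2.2))
    (sy12 : ¬(y₁.1 = y₂.1 ∧ y₁.2.2 = y₂.2.2))
    (s22 : ¬(x₂.1 = y₂.1 ∧ x₂.2.2 = y₂.2.2))
    (s3 sV : Finset (Carving n q))
    (hs3 : ∀ ω, ω ∈ s3 ↔ (IsValidCarving ι ω ∧
      (MatchE ι ω x₁ y₁ ∧ MatchE ι ω x₂ y₂)))
    (hsV : ∀ ω, ω ∈ sV ↔ IsValidCarving ι ω) :
    q ^ 2 * s3.card ≤ 4 * sV.card := by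
  set s1 : Finset (Carving n q) := Finset.univ.filter fun ω =>
    IsValidCarving ι ω ∧ MatchE ι ω x₁ y₁ with hs1def
  have hs1 : ∀ ω, ω ∈ s1 ↔ (IsValidCarving ι ω ∧ MatchE ι ω x₁ y₁) := by
    intro ω
    rw [hs1def, Finset.mem_filter]
    exact ⟨fun h => h.2, fun h => ⟨Finset.mem_univ _, h⟩⟩
  have c2 : q * s3.card ≤ 2 * s1.card := by
    refine pair_bound hι x₂ y₂ hy2 s22
      (fun ω => MatchE ι ω x₁ y₁)
      (fun ω v => matchE_upd ι ω v x₁ y₁ y₂ s12 sy12) s3 s1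
      (fun ω => (hs3 ω)) hs1
  have c1 : q * s1.card ≤ 2 * sV.card := by
    refine pair_bound hι x₁ y₁ hy1 s11 (fun _ => True)
      (fun ω v => Iff.rfl) s1 sV
      (fun ω => (hs1 ω).trans ?_) (fun ω => (hsV ω).trans ?_)
    · constructor
      · rintro ⟨h1, h2⟩
        exact ⟨h1, trivial, h2⟩
      · rintro ⟨h1, -, h2⟩
        exact ⟨h1, h2⟩
    · constructor
      · intro h
        exact ⟨h, trivial⟩
      · rintro ⟨h, -⟩
        exact h
  calc q ^ 2 * s3.card = q * (q * s3.card) := by ring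
    _ ≤ q * (2 * s1.card) := Nat.mul_le_mul_left _ c2
    _ = 2 * (q * s1.card) := by ring
    _ ≤ 2 * (2 * sV.card) := Nat.mul_le_mul_left _ c1
    _ = 4 * sV.card := by ring

end TupleCount
noncomputable section WindowMaster

open Finset
open scoped Classical

variable {n q : ℕ}

open scoped Classical in
def tup3Set (n a b k : ℕ) :
    Finset ((Cell n × Cell n × Fin 2) × (Cell n × Cell n × Fin 2) ×
      (Cell n × Cell n × Fin 2) × (Cell n × Cell n × Fin 2) ×
      (Cell n × Cell n × Fin 2) × (Cell n × Cell n × Fin 2)) :=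
  (winEdges n a b k ×ˢ (winEdges n a b k ×ˢ (winEdges n a b k ×ˢ
    (winEdges n a b k ×ˢ (winEdges n a b k ×ˢ winEdges n a b k))))).filter fun t =>
    t.1 ≠ t.2.1 ∧ t.1 ≠ t.2.2.1 ∧ t.1 ≠ t.2.2.2.1 ∧ t.1 ≠ t.2.2.2.2.1 ∧
    t.1 ≠ t.2.2.2.2.2 ∧ t.2.1 ≠ t.2.2.1 ∧ t.2.1 ≠ t.2.2.2.1 ∧
    t.2.1 ≠ t.2.2.2.2.1 ∧ t.2.1 ≠ t.2.2.2.2.2 ∧ t.2.2.1 ≠ t.2.2.2.1 ∧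
    t.2.2.1 ≠ t.2.2.2.2.1 ∧ t.2.2.1 ≠ t.2.2.2.2.2 ∧ t.2.2.2.1 ≠ t.2.2.2.2.1 ∧
    t.2.2.2.1 ≠ t.2.2.2.2.2 ∧ t.2.2.2.2.1 ≠ t.2.2.2.2.2

open scoped Classical in
def tup2Set (n a b k : ℕ) :
    Finset ((Cell n × Cell n × Fin 2) × (Cell n × Cell n × Fin 2) ×
      (Cell n × Cell n × Fin 2) × (Cell n × Cell n × Fin 2)) :=
  (winEdges n a b k ×ˢ (winEdges n a b k ×ˢ (winEdges n a b k ×ˢ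
    winEdges n a b k))).filter fun t =>
    t.1 ≠ t.2.1 ∧ t.1 ≠ t.2.2.1 ∧ t.1 ≠ t.2.2.2 ∧ t.2.1 ≠ t.2.2.1 ∧
    t.2.1 ≠ t.2.2.2 ∧ t.2.2.1 ≠ t.2.2.2

lemma tup3Set_card (a b k : ℕ) :
    (tup3Set n a b k).card ≤ (winEdges n a b k).card ^ 6 := by
  refine (Finset.card_filter_le _ _).trans (le_of_eq ?_)
  simp only [Finset.card_product]
  ring

lemma tup2Set_card (a b k : ℕ) :
    (tup2Set n a b k).card ≤ (winEdges n a b k).card ^ 4 := by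
  refine (Finset.card_filter_le _ _).trans (le_of_eq ?_)
  simp only [Finset.card_product]
  ring

lemma winEdges_card (a b k : ℕ) : (winEdges n a b k).card ≤ k * k * 2 := by
  have hle : (winEdges n a b k).card ≤
      (((Finset.range k ×ˢ Finset.range k) ×ˢ (Finset.univ : Finset (Fin 2)))).card := by
    apply Finset.card_le_card_of_injOn
      (fun x => ((x.1.1.val - a, x.1.2.val - b), x.2.2))
    · intro x hx
      have hx' := (Finset.mem_filter.1 hx).2
      obtain ⟨⟨h1, h2, h3, h4⟩, -, -⟩ := hx'
      simp only [Finset.mem_coe, Finset.mem_product, Finset.mem_range, Finset.mem_univ, and_true]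
      exact ⟨by omega, by omega⟩
    · intro x hx x' hx' heq
      have hxm := (Finset.mem_filter.1 (Finset.mem_coe.1 hx)).2
      have hxm' := (Finset.mem_filter.1 (Finset.mem_coe.1 hx')).2
      obtain ⟨⟨ha1, ha2, hb1, hb2⟩, -, hadj⟩ := hxm
      obtain ⟨⟨ha1', ha2', hb1', hb2'⟩, -, hadj'⟩ := hxm'
      have e1 : x.1.1.val - a = x'.1.1.val - a := congrArg (fun z => z.1.1) heq
      have e2 : x.1.2.val - b = x'.1.2.val - b := congrArg (fun z => z.1.2) heq
      have e3 : x.2.2 = x'.2.2 := congrArg (fun z => z.2) heq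
      have hcell : x.1 = x'.1 := by
        refine Prod.ext (Fin.ext ?_) (Fin.ext ?_)
        · omega
        · omega
      have hmid : x.2.1 = x'.2.1 := by
        apply cellZ_inj
        rw [hadj, hadj', hcell, e3]
      exact Prod.ext hcell (Prod.ext hmid e3)
  refine hle.trans (le_of_eq ?_)
  simp [Finset.card_product]

lemma bad3_subset {ι : Fin q → Fin q} (hι : ι ∘ ι = id) (a b k : ℕ) :
    (Finset.univ.filter fun ω : Carving n q =>
      IsValidCarving ι ω ∧ 3 ≤ windowSM ι (planted n) ω a b k) ⊆
    (tup3Set n a b k).biUnion (fun t =>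
      Finset.univ.filter fun ω : Carving n q => IsValidCarving ι ω ∧
        (MatchE ι ω t.1 t.2.1 ∧ MatchE ι ω t.2.2.1 t.2.2.2.1 ∧
          MatchE ι ω t.2.2.2.2.1 t.2.2.2.2.2)) := by
  intro ω hω
  obtain ⟨-, hv, h3⟩ := Finset.mem_filter.1 hω
  rw [windowSM_planted_fibers hι ω a b k] at h3
  obtain ⟨g, hg1, hg2⟩ :=
    extract_pairs 3 (winEdges n a b k) (fun x => typeRep ι (sideVal ω x)) h3
  have d01 : (0 : Fin 3) ≠ 1 := by decide
  have d02 : (0 : Fin 3) ≠ 2 := by decide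
  have d12 : (1 : Fin 3) ≠ 2 := by decide
  refine Finset.mem_biUnion.2
    ⟨((g 0).1, (g 0).2, (g 1).1, (g 1).2, (g 2).1, (g 2).2), ?_, ?_⟩
  · refine Finset.mem_filter.2 ⟨?_, ?_⟩
    · refine Finset.mem_product.2 ⟨(hg1 0).1, Finset.mem_product.2 ⟨(hg1 0).2.1,
        Finset.mem_product.2 ⟨(hg1 1).1, Finset.mem_product.2 ⟨(hg1 1).2.1,
        Finset.mem_product.2 ⟨(hg1 2).1, (hg1 2).2.1⟩⟩⟩⟩⟩
    · exact ⟨(hg1 0).2.2.2, (hg2 0 1 d01).1, (hg2 0 1 d01).2.1,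
        (hg2 0 2 d02).1, (hg2 0 2 d02).2.1,
        (hg2 0 1 d01).2.2.1, (hg2 0 1 d01).2.2.2,
        (hg2 0 2 d02).2.2.1, (hg2 0 2 d02).2.2.2,
        (hg1 1).2.2.2, (hg2 1 2 d12).1, (hg2 1 2 d12).2.1,
        (hg2 1 2 d12).2.2.1, (hg2 1 2 d12).2.2.2, (hg1 2).2.2.2⟩
  · refine Finset.mem_filter.2 ⟨Finset.mem_univ _, hv, ?_, ?_, ?_⟩
    · exact typeRep_match hι ((hg1 0).2.2.1).symm
    · exact typeRep_match hι ((hg1 1).2.2.1).symm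
    · exact typeRep_match hι ((hg1 2).2.2.1).symm

lemma bad2_subset {ι : Fin q → Fin q} (hι : ι ∘ ι = id) (a b k : ℕ) :
    (Finset.univ.filter fun ω : Carving n q =>
      IsValidCarving ι ω ∧ 2 ≤ windowSM ι (planted n) ω a b k) ⊆
    (tup2Set n a b k).biUnion (fun t =>
      Finset.univ.filter fun ω : Carving n q => IsValidCarving ι ω ∧
        (MatchE ι ω t.1 t.2.1 ∧ MatchE ι ω t.2.2.1 t.2.2.2)) := by
  intro ω hω
  obtain ⟨-, hv, h2⟩ := Finset.mem_filter.1 hω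
  rw [windowSM_planted_fibers hι ω a b k] at h2
  obtain ⟨g, hg1, hg2⟩ :=
    extract_pairs 2 (winEdges n a b k) (fun x => typeRep ι (sideVal ω x)) h2
  have d01 : (0 : Fin 2) ≠ 1 := by decide
  refine Finset.mem_biUnion.2 ⟨((g 0).1, (g 0).2, (g 1).1, (g 1).2), ?_, ?_⟩
  · refine Finset.mem_filter.2 ⟨?_, ?_⟩
    · refine Finset.mem_product.2 ⟨(hg1 0).1, Finset.mem_product.2 ⟨(hg1 0).2.1,
        Finset.mem_product.2 ⟨(hg1 1).1, (hg1 1).2.1⟩⟩⟩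
    · exact ⟨(hg1 0).2.2.2, (hg2 0 1 d01).1, (hg2 0 1 d01).2.1,
        (hg2 0 1 d01).2.2.1, (hg2 0 1 d01).2.2.2, (hg1 1).2.2.2⟩
  · refine Finset.mem_filter.2 ⟨Finset.mem_univ _, hv, ?_, ?_⟩
    · exact typeRep_match hι ((hg1 0).2.2.1).symm
    · exact typeRep_match hι ((hg1 1).2.2.1).symm

lemma window3_count {ι : Fin q → Fin q} (hι : ι ∘ ι = id) (a b k : ℕ) :
    q ^ 3 * (Finset.univ.filter fun ω : Carving n q =>
        IsValidCarving ι ω ∧ 3 ≤ windowSM ι (planted n) ω a b k).card ≤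
      (k * k * 2) ^ 6 *
        (8 * (Finset.univ.filter fun ω : Carving n q => IsValidCarving ι ω).card) := by
  have h1 : (Finset.univ.filter fun ω : Carving n q =>
      IsValidCarving ι ω ∧ 3 ≤ windowSM ι (planted n) ω a b k).card ≤
      ∑ t ∈ tup3Set n a b k,
        (Finset.univ.filter fun ω : Carving n q => IsValidCarving ι ω ∧
          (MatchE ι ω t.1 t.2.1 ∧ MatchE ι ω t.2.2.1 t.2.2.2.1 ∧
            MatchE ι ω t.2.2.2.2.1 t.2.2.2.2.2)).card :=
    (Finset.card_le_card (bad3_subset hι a b k)).trans Finset.card_biUnion_le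
  have h2 : ∀ t ∈ tup3Set n a b k,
      q ^ 3 * (Finset.univ.filter fun ω : Carving n q => IsValidCarving ι ω ∧
        (MatchE ι ω t.1 t.2.1 ∧ MatchE ι ω t.2.2.1 t.2.2.2.1 ∧
          MatchE ι ω t.2.2.2.2.1 t.2.2.2.2.2)).card ≤
      8 * (Finset.univ.filter fun ω : Carving n q => IsValidCarving ι ω).card := by
    intro t ht
    obtain ⟨hprod, hd⟩ := Finset.mem_filter.1 ht
    have hm1 := (Finset.mem_product.1 hprod).1
    have hrest1 := (Finset.mem_product.1 hprod).2
    have hm2 := (Finset.mem_product.1 hrest1).1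
    have hrest2 := (Finset.mem_product.1 hrest1).2
    have hm3 := (Finset.mem_product.1 hrest2).1
    have hrest3 := (Finset.mem_product.1 hrest2).2
    have hm4 := (Finset.mem_product.1 hrest3).1
    have hrest4 := (Finset.mem_product.1 hrest3).2
    have hm5 := (Finset.mem_product.1 hrest4).1
    have hm6 := (Finset.mem_product.1 hrest4).2
    obtain ⟨d12, d13, d14, d15, d16, d23, d24, d25, d26, d34, d35, d36, d45, d46, d56⟩ := hd
    refine triple_bound hι t.1 t.2.1 t.2.2.1 t.2.2.2.1 t.2.2.2.2.1 t.2.2.2.2.2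
      (winEdges_adj hm2) (winEdges_adj hm4) (winEdges_adj hm6)
      (side_ne_of_mem hm1 hm2 d12)
      (side_ne_of_mem hm1 hm4 d14)
      (side_ne_of_mem hm2 hm4 d24)
      (side_ne_of_mem hm3 hm4 d34)
      (side_ne_of_mem hm1 hm6 d16)
      (side_ne_of_mem hm2 hm6 d26)
      (side_ne_of_mem hm3 hm6 d36)
      (side_ne_of_mem hm4 hm6 d46)
      (side_ne_of_mem hm5 hm6 d56)
      _ _ (fun ω => by
        rw [Finset.mem_filter]
        exact ⟨fun h => h.2, fun h => ⟨Finset.mem_univ _, h⟩⟩)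
      (fun ω => by
        rw [Finset.mem_filter]
        exact ⟨fun h => h.2, fun h => ⟨Finset.mem_univ _, h⟩⟩)
  calc q ^ 3 * (Finset.univ.filter fun ω : Carving n q =>
        IsValidCarving ι ω ∧ 3 ≤ windowSM ι (planted n) ω a b k).card
      ≤ q ^ 3 * ∑ t ∈ tup3Set n a b k,
        (Finset.univ.filter fun ω : Carving n q => IsValidCarving ι ω ∧
          (MatchE ι ω t.1 t.2.1 ∧ MatchE ι ω t.2.2.1 t.2.2.2.1 ∧
            MatchE ι ω t.2.2.2.2.1 t.2.2.2.2.2)).card := Nat.mul_le_mul_left _ h1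
    _ = ∑ t ∈ tup3Set n a b k, q ^ 3 *
        (Finset.univ.filter fun ω : Carving n q => IsValidCarving ι ω ∧
          (MatchE ι ω t.1 t.2.1 ∧ MatchE ι ω t.2.2.1 t.2.2.2.1 ∧
            MatchE ι ω t.2.2.2.2.1 t.2.2.2.2.2)).card := Finset.mul_sum _ _ _
    _ ≤ ∑ _t ∈ tup3Set n a b k,
        8 * (Finset.univ.filter fun ω : Carving n q => IsValidCarving ι ω).card :=
      Finset.sum_le_sum h2
    _ = (tup3Set n a b k).card *
        (8 * (Finset.univ.filter fun ω : Carving n q => IsValidCarving ι ω).card) := by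
      rw [Finset.sum_const, smul_eq_mul]
    _ ≤ (k * k * 2) ^ 6 *
        (8 * (Finset.univ.filter fun ω : Carving n q => IsValidCarving ι ω).card) := by
      refine Nat.mul_le_mul_right _ ?_
      exact (tup3Set_card a b k).trans (Nat.pow_le_pow_left (winEdges_card a b k) 6)

lemma window2_count {ι : Fin q → Fin q} (hι : ι ∘ ι = id) (a b k : ℕ) :
    q ^ 2 * (Finset.univ.filter fun ω : Carving n q =>
        IsValidCarving ι ω ∧ 2 ≤ windowSM ι (planted n) ω a b k).card ≤
      (k * k * 2) ^ 4 *
        (4 * (Finset.univ.filter fun ω : Carving n q => IsValidCarving ι ω).card) := by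
  have h1 : (Finset.univ.filter fun ω : Carving n q =>
      IsValidCarving ι ω ∧ 2 ≤ windowSM ι (planted n) ω a b k).card ≤
      ∑ t ∈ tup2Set n a b k,
        (Finset.univ.filter fun ω : Carving n q => IsValidCarving ι ω ∧
          (MatchE ι ω t.1 t.2.1 ∧ MatchE ι ω t.2.2.1 t.2.2.2)).card :=
    (Finset.card_le_card (bad2_subset hι a b k)).trans Finset.card_biUnion_le
  have h2 : ∀ t ∈ tup2Set n a b k,
      q ^ 2 * (Finset.univ.filter fun ω : Carving n q => IsValidCarving ι ω ∧
        (MatchE ι ω t.1 t.2.1 ∧ MatchE ι ω t.2.2.1 t.2.2.2)).card ≤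
      4 * (Finset.univ.filter fun ω : Carving n q => IsValidCarving ι ω).card := by
    intro t ht
    obtain ⟨hprod, hd⟩ := Finset.mem_filter.1 ht
    have hm1 := (Finset.mem_product.1 hprod).1
    have hrest1 := (Finset.mem_product.1 hprod).2
    have hm2 := (Finset.mem_product.1 hrest1).1
    have hrest2 := (Finset.mem_product.1 hrest1).2
    have hm3 := (Finset.mem_product.1 hrest2).1
    have hm4 := (Finset.mem_product.1 hrest2).2
    obtain ⟨d12, d13, d14, d23, d24, d34⟩ := hd
    refine double_bound hι t.1 t.2.1 t.2.2.1 t.2.2.2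
      (winEdges_adj hm2) (winEdges_adj hm4)
      (side_ne_of_mem hm1 hm2 d12)
      (side_ne_of_mem hm1 hm4 d14)
      (side_ne_of_mem hm2 hm4 d24)
      (side_ne_of_mem hm3 hm4 d34)
      _ _ (fun ω => by
        rw [Finset.mem_filter]
        exact ⟨fun h => h.2, fun h => ⟨Finset.mem_univ _, h⟩⟩)
      (fun ω => by
        rw [Finset.mem_filter]
        exact ⟨fun h => h.2, fun h => ⟨Finset.mem_univ _, h⟩⟩)
  calc q ^ 2 * (Finset.univ.filter fun ω : Carving n q =>
        IsValidCarving ι ω ∧ 2 ≤ windowSM ι (planted n) ω a b k).card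
      ≤ q ^ 2 * ∑ t ∈ tup2Set n a b k,
        (Finset.univ.filter fun ω : Carving n q => IsValidCarving ι ω ∧
          (MatchE ι ω t.1 t.2.1 ∧ MatchE ι ω t.2.2.1 t.2.2.2)).card :=
      Nat.mul_le_mul_left _ h1
    _ = ∑ t ∈ tup2Set n a b k, q ^ 2 *
        (Finset.univ.filter fun ω : Carving n q => IsValidCarving ι ω ∧
          (MatchE ι ω t.1 t.2.1 ∧ MatchE ι ω t.2.2.1 t.2.2.2)).card := Finset.mul_sum _ _ _
    _ ≤ ∑ _t ∈ tup2Set n a b k,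
        4 * (Finset.univ.filter fun ω : Carving n q => IsValidCarving ι ω).card :=
      Finset.sum_le_sum h2
    _ = (tup2Set n a b k).card *
        (4 * (Finset.univ.filter fun ω : Carving n q => IsValidCarving ι ω).card) := by
      rw [Finset.sum_const, smul_eq_mul]
    _ ≤ (k * k * 2) ^ 4 *
        (4 * (Finset.univ.filter fun ω : Carving n q => IsValidCarving ι ω).card) := by
      refine Nat.mul_le_mul_right _ ?_
      exact (tup2Set_card a b k).trans (Nat.pow_le_pow_left (winEdges_card a b k) 4)

end WindowMaster
noncomputable section MasterBound

open Finset
open scoped Classical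

variable {n q : ℕ}

lemma zmod4_cases (d : ZMod 4) : d = 0 ∨ d = 1 ∨ d = 2 ∨ d = 3 := by
  revert d; decide

lemma valid_exists {ι : Fin q → Fin q} (hι : ι ∘ ι = id) (hq : 0 < q) :
    ∃ ω : Carving n q, IsValidCarving ι ω := by
  set j : Fin q := ⟨0, hq⟩
  refine ⟨fun _ d => if d = 0 ∨ d = 1 then j else ι j, ?_⟩
  intro p p' d _
  rcases zmod4_cases d with rfl | rfl | rfl | rfl
  · simp only []
    rw [if_neg (by decide), if_pos (by decide)]
  · simp only []
    rw [if_neg (by decide), if_pos (by decide)]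
  · simp only []
    rw [if_pos (by decide), if_neg (by decide)]
    exact (invol hι j).symm
  · simp only []
    rw [if_pos (by decide), if_neg (by decide)]
    exact (invol hι j).symm

/-- Index set of boundary windows. -/
def bSet (n k : ℕ) : Finset (ℕ × ℕ) :=
  (Finset.range (n+1)).biUnion fun t =>
    {((0:ℕ), t), (t, (0:ℕ)), (n - k, t), (t, n - k)}

lemma bSet_card (n k : ℕ) : (bSet n k).card ≤ (n + 1) * 4 := by
  refine Finset.card_biUnion_le.trans ?_
  have h4 : ∀ t : ℕ, (({((0:ℕ), t), (t, (0:ℕ)), (n - k, t), (t, n - k)}) :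
      Finset (ℕ × ℕ)).card ≤ 4 := by
    intro t
    have h1 := Finset.card_insert_le ((0:ℕ), t)
      ({(t, (0:ℕ)), (n - k, t), (t, n - k)} : Finset (ℕ × ℕ))
    have h2 := Finset.card_insert_le (t, (0:ℕ))
      ({(n - k, t), (t, n - k)} : Finset (ℕ × ℕ))
    have h3 := Finset.card_insert_le (n - k, t) ({(t, n - k)} : Finset (ℕ × ℕ))
    have h5 : ({(t, n - k)} : Finset (ℕ × ℕ)).card = 1 := Finset.card_singleton _
    omega
  calc ∑ t ∈ Finset.range (n+1), (({((0:ℕ), t), (t, (0:ℕ)), (n - k, t), (t, n - k)}) :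
      Finset (ℕ × ℕ)).card ≤ ∑ _t ∈ Finset.range (n+1), 4 :=
        Finset.sum_le_sum fun t _ => h4 t
    _ = (n + 1) * 4 := by
        rw [Finset.sum_const, smul_eq_mul, Finset.card_range]

lemma notW_subset {ι : Fin q → Fin q} (k : ℕ) :
    (Finset.univ.filter fun ω : Carving n q => IsValidCarving ι ω ∧ ¬ Wgood ι k ω) ⊆
      ((Finset.range (n+1) ×ˢ Finset.range (n+1)).biUnion fun ab =>
        Finset.univ.filter fun ω : Carving n q =>
          IsValidCarving ι ω ∧ 3 ≤ windowSM ι (planted n) ω ab.1 ab.2 k) ∪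
      ((bSet n k).biUnion fun ab =>
        Finset.univ.filter fun ω : Carving n q =>
          IsValidCarving ι ω ∧ 2 ≤ windowSM ι (planted n) ω ab.1 ab.2 k) := by
  intro ω hω
  obtain ⟨-, hv, hne⟩ := Finset.mem_filter.1 hω
  have hne' : ∃ a b, (a + k ≤ n) ∧ (b + k ≤ n) ∧
      ¬(windowSM ι (planted n) ω a b k ≤ 2 ∧
        ((a = 0 ∨ b = 0 ∨ a + k = n ∨ b + k = n) →
          windowSM ι (planted n) ω a b k ≤ 1)) := by
    by_contra hc
    push_neg at hc
    exact hne hc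
  obtain ⟨a, b, h1, h2, h3⟩ := hne'
  by_cases hc3 : 3 ≤ windowSM ι (planted n) ω a b k
  · refine Finset.mem_union_left _ (Finset.mem_biUnion.2 ⟨(a, b), ?_, ?_⟩)
    · refine Finset.mem_product.2 ⟨Finset.mem_range.2 (by omega),
        Finset.mem_range.2 (by omega)⟩
    · exact Finset.mem_filter.2 ⟨Finset.mem_univ _, hv, hc3⟩
  · have hsm2 : windowSM ι (planted n) ω a b k ≤ 2 := by omega
    have hQ : ¬((a = 0 ∨ b = 0 ∨ a + k = n ∨ b + k = n) →
        windowSM ι (planted n) ω a b k ≤ 1) := fun hq' => h3 ⟨hsm2, hq'⟩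
    have hbdry : a = 0 ∨ b = 0 ∨ a + k = n ∨ b + k = n := by
      by_contra hb
      exact hQ fun hb' => absurd hb' hb
    have hsm : 2 ≤ windowSM ι (planted n) ω a b k := by
      by_contra hs
      exact hQ fun _ => by omega
    refine Finset.mem_union_right _ (Finset.mem_biUnion.2 ⟨(a, b), ?_,
      Finset.mem_filter.2 ⟨Finset.mem_univ _, hv, hsm⟩⟩)
    unfold bSet
    rcases hbdry with rfl | rfl | hab | hab
    · exact Finset.mem_biUnion.2 ⟨b, Finset.mem_range.2 (by omega), by simp⟩
    · exact Finset.mem_biUnion.2 ⟨a, Finset.mem_range.2 (by omega), by simp⟩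
    · have ha : a = n - k := by omega
      subst ha
      exact Finset.mem_biUnion.2 ⟨b, Finset.mem_range.2 (by omega), by simp⟩
    · have hb : b = n - k := by omega
      subst hb
      exact Finset.mem_biUnion.2 ⟨a, Finset.mem_range.2 (by omega), by simp⟩

lemma notW_bound {ι : Fin q → Fin q} (hι : ι ∘ ι = id) (k : ℕ) (hq : 0 < q) :
    ((Finset.univ.filter fun ω : Carving n q =>
        IsValidCarving ι ω ∧ ¬ Wgood ι k ω).card : ℝ) ≤
      (((n : ℝ) + 1) ^ 2 * (((k : ℝ) * k * 2) ^ 6 * 8) / (q : ℝ) ^ 3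
        + ((n : ℝ) + 1) * 4 * (((k : ℝ) * k * 2) ^ 4 * 4) / (q : ℝ) ^ 2) *
        ((Finset.univ.filter fun ω : Carving n q => IsValidCarving ι ω).card : ℝ) := by
  have hq3 : (0 : ℝ) < (q : ℝ) ^ 3 := by positivity
  have hq2 : (0 : ℝ) < (q : ℝ) ^ 2 := by positivity
  set V : ℕ := (Finset.univ.filter fun ω : Carving n q => IsValidCarving ι ω).card with hV
  have hnat : (Finset.univ.filter fun ω : Carving n q =>
      IsValidCarving ι ω ∧ ¬ Wgood ι k ω).card ≤
      (∑ ab ∈ Finset.range (n+1) ×ˢ Finset.range (n+1),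
        (Finset.univ.filter fun ω : Carving n q =>
          IsValidCarving ι ω ∧ 3 ≤ windowSM ι (planted n) ω ab.1 ab.2 k).card)
      + (∑ ab ∈ bSet n k,
        (Finset.univ.filter fun ω : Carving n q =>
          IsValidCarving ι ω ∧ 2 ≤ windowSM ι (planted n) ω ab.1 ab.2 k).card) := by
    refine (Finset.card_le_card (notW_subset k)).trans ?_
    refine (Finset.card_union_le _ _).trans ?_
    exact Nat.add_le_add Finset.card_biUnion_le Finset.card_biUnion_le
  have hterm3 : ∀ ab : ℕ × ℕ,
      ((Finset.univ.filter fun ω : Carving n q =>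
        IsValidCarving ι ω ∧ 3 ≤ windowSM ι (planted n) ω ab.1 ab.2 k).card : ℝ) ≤
      ((k : ℝ) * k * 2) ^ 6 * 8 * V / (q : ℝ) ^ 3 := by
    intro ab
    rw [le_div_iff₀ hq3]
    have := window3_count (n := n) hι ab.1 ab.2 k
    calc ((Finset.univ.filter fun ω : Carving n q =>
          IsValidCarving ι ω ∧ 3 ≤ windowSM ι (planted n) ω ab.1 ab.2 k).card : ℝ)
          * (q : ℝ) ^ 3
        = ((q ^ 3 * (Finset.univ.filter fun ω : Carving n q =>
          IsValidCarving ι ω ∧ 3 ≤ windowSM ι (planted n) ω ab.1 ab.2 k).card : ℕ) : ℝ) := by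
          push_cast; ring
      _ ≤ (((k * k * 2) ^ 6 * (8 * V) : ℕ) : ℝ) := by exact_mod_cast this
      _ = ((k : ℝ) * k * 2) ^ 6 * 8 * V := by push_cast; ring
  have hterm2 : ∀ ab : ℕ × ℕ,
      ((Finset.univ.filter fun ω : Carving n q =>
        IsValidCarving ι ω ∧ 2 ≤ windowSM ι (planted n) ω ab.1 ab.2 k).card : ℝ) ≤
      ((k : ℝ) * k * 2) ^ 4 * 4 * V / (q : ℝ) ^ 2 := by
    intro ab
    rw [le_div_iff₀ hq2]
    have := window2_count (n := n) hι ab.1 ab.2 k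
    calc ((Finset.univ.filter fun ω : Carving n q =>
          IsValidCarving ι ω ∧ 2 ≤ windowSM ι (planted n) ω ab.1 ab.2 k).card : ℝ)
          * (q : ℝ) ^ 2
        = ((q ^ 2 * (Finset.univ.filter fun ω : Carving n q =>
          IsValidCarving ι ω ∧ 2 ≤ windowSM ι (planted n) ω ab.1 ab.2 k).card : ℕ) : ℝ) := by
          push_cast; ring
      _ ≤ (((k * k * 2) ^ 4 * (4 * V) : ℕ) : ℝ) := by exact_mod_cast this
      _ = ((k : ℝ) * k * 2) ^ 4 * 4 * V := by push_cast; ring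
  calc ((Finset.univ.filter fun ω : Carving n q =>
      IsValidCarving ι ω ∧ ¬ Wgood ι k ω).card : ℝ)
      ≤ (∑ ab ∈ Finset.range (n+1) ×ˢ Finset.range (n+1),
        ((Finset.univ.filter fun ω : Carving n q =>
          IsValidCarving ι ω ∧ 3 ≤ windowSM ι (planted n) ω ab.1 ab.2 k).card : ℝ))
      + (∑ ab ∈ bSet n k,
        ((Finset.univ.filter fun ω : Carving n q =>
          IsValidCarving ι ω ∧ 2 ≤ windowSM ι (planted n) ω ab.1 ab.2 k).card : ℝ)) := by
        exact_mod_cast hnat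
    _ ≤ ((Finset.range (n+1) ×ˢ Finset.range (n+1)).card : ℝ)
          * (((k : ℝ) * k * 2) ^ 6 * 8 * V / (q : ℝ) ^ 3)
        + ((bSet n k).card : ℝ) * (((k : ℝ) * k * 2) ^ 4 * 4 * V / (q : ℝ) ^ 2) := by
        refine add_le_add ?_ ?_
        · refine (Finset.sum_le_sum fun ab _ => hterm3 ab).trans ?_
          rw [Finset.sum_const, nsmul_eq_mul]
        · refine (Finset.sum_le_sum fun ab _ => hterm2 ab).trans ?_
          rw [Finset.sum_const, nsmul_eq_mul]
    _ ≤ (((n : ℝ) + 1) * ((n : ℝ) + 1))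
          * (((k : ℝ) * k * 2) ^ 6 * 8 * V / (q : ℝ) ^ 3)
        + (((n : ℝ) + 1) * 4) * (((k : ℝ) * k * 2) ^ 4 * 4 * V / (q : ℝ) ^ 2) := by
        refine add_le_add (mul_le_mul_of_nonneg_right ?_ (by positivity))
          (mul_le_mul_of_nonneg_right ?_ (by positivity))
        · rw [Finset.card_product, Finset.card_range]
          push_cast
          exact le_of_eq rfl
        · have := bSet_card n k
          calc ((bSet n k).card : ℝ) ≤ (((n+1) * 4 : ℕ) : ℝ) := by exact_mod_cast this
            _ = ((n : ℝ) + 1) * 4 := by push_cast; ring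
    _ = (((n : ℝ) + 1) ^ 2 * (((k : ℝ) * k * 2) ^ 6 * 8) / (q : ℝ) ^ 3
        + ((n : ℝ) + 1) * 4 * (((k : ℝ) * k * 2) ^ 4 * 4) / (q : ℝ) ^ 2) * V := by
        ring

end MasterBound

set_option maxHeartbeats 1000000 in
/-- Let `c > 0` be fixed, `q = q(n) ≥ c·n`, and let `k = k(n)` be a
sequence of positive integers with `k = o(n^{1/12})`.  Then with probability tending to `1`
as `n → ∞`, a random `n × n` puzzle with `q` jig types satisfies: either all feasible
complete assemblies are similar, or there exist at least two non-similar feasible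
complete assemblies that are `k`-good. -/
theorem statement_8 (c : ℝ) (hc : 0 < c) (q : ℕ → ℕ) (ι : ∀ n, Fin (q n) → Fin (q n))
    (hι : ∀ n, ι n ∘ ι n = id)
    (hq : ∀ n : ℕ, (c * n : ℝ) ≤ q n)
    (k : ℕ → ℕ) (hkpos : ∀ n, 0 < k n)
    (hko : Tendsto (fun n => (k n : ℝ) / (n : ℝ) ^ ((1 : ℝ) / 12)) atTop (nhds 0)) :
    Tendsto (fun n =>
        puzzleProb (ι n) fun ω : Carving n (q n) =>
          (∀ A B : Assembly n,
              A.Feasible (ι n) ω → B.Feasible (ι n) ω → PuzzleSimilar A B ω) ∨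
          (∃ A B : Assembly n,
              A.Feasible (ι n) ω ∧ B.Feasible (ι n) ω ∧
              KGood (ι n) A ω (k n) ∧ KGood (ι n) B ω (k n) ∧ ¬ PuzzleSimilar A B ω))
      atTop (nhds 1) := by
  classical
  show Tendsto (fun n => puzzleProb (n := n) (ι n) (EV (n := n) (ι n) (k n))) atTop (nhds 1)
  set ε : ℕ → ℝ := fun n =>
    8 * (((n : ℝ) + 1) ^ 2 * (((k n : ℝ) * (k n : ℝ) * 2) ^ 6 * 8) / (q n : ℝ) ^ 3
      + ((n : ℝ) + 1) * 4 * (((k n : ℝ) * (k n : ℝ) * 2) ^ 4 * 4) / (q n : ℝ) ^ 2) with hε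
  have hcn : Tendsto (fun n : ℕ => c * (n : ℝ)) atTop atTop :=
    Tendsto.const_mul_atTop hc tendsto_natCast_atTop_atTop
  have hev1 : ∀ᶠ n : ℕ in atTop, (1 : ℝ) ≤ c * n := hcn.eventually_ge_atTop 1
  set M : ℝ := 8 * (2048 / c ^ 3 + 512 / c ^ 2) with hM
  -- ε tends to 0
  have hεle : ∀ᶠ n : ℕ in atTop,
      ε n ≤ M * ((k n : ℝ) / (n : ℝ) ^ ((1 : ℝ) / 12)) ^ 12 := by
    filter_upwards [hev1] with n hn
    have hNpos : (0 : ℝ) < (n : ℝ) := by nlinarith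
    have hN1 : (1 : ℝ) ≤ (n : ℝ) := by
      have h0 : 0 < n := Nat.cast_pos.mp hNpos
      exact_mod_cast h0
    have hK1 : (1 : ℝ) ≤ (k n : ℝ) := by exact_mod_cast hkpos n
    have hQc : c * (n : ℝ) ≤ (q n : ℝ) := hq n
    have hcN : (0 : ℝ) < c * (n : ℝ) := by positivity
    have hQpos : (0 : ℝ) < (q n : ℝ) := lt_of_lt_of_le hcN hQc
    have hA : ((n : ℝ) + 1) ^ 2 * (((k n : ℝ) * (k n : ℝ) * 2) ^ 6 * 8) / (q n : ℝ) ^ 3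
        ≤ (4 * (n : ℝ) ^ 2) * (512 * (k n : ℝ) ^ 12) / ((c * (n : ℝ)) ^ 3) := by
      apply div_le_div₀ (by positivity) ?_ (by positivity)
        (pow_le_pow_left₀ (le_of_lt hcN) hQc 3)
      have h1 : ((n : ℝ) + 1) ^ 2 ≤ 4 * (n : ℝ) ^ 2 := by nlinarith [hN1]
      have h2 : (((k n : ℝ) * (k n : ℝ) * 2) ^ 6 * 8) = 512 * (k n : ℝ) ^ 12 := by ring
      rw [h2]
      exact mul_le_mul_of_nonneg_right h1 (by positivity)
    have hAeq : (4 * (n : ℝ) ^ 2) * (512 * (k n : ℝ) ^ 12) / ((c * (n : ℝ)) ^ 3)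
        = (2048 / c ^ 3) * ((k n : ℝ) ^ 12 / (n : ℝ)) := by
      field_simp
      ring
    have hB : ((n : ℝ) + 1) * 4 * (((k n : ℝ) * (k n : ℝ) * 2) ^ 4 * 4) / (q n : ℝ) ^ 2
        ≤ (2 * (n : ℝ) * 4) * (64 * (k n : ℝ) ^ 8) / ((c * (n : ℝ)) ^ 2) := by
      apply div_le_div₀ (by positivity) ?_ (by positivity)
        (pow_le_pow_left₀ (le_of_lt hcN) hQc 2)
      have h1 : ((n : ℝ) + 1) * 4 ≤ 2 * (n : ℝ) * 4 := by nlinarith [hN1]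
      have h2 : (((k n : ℝ) * (k n : ℝ) * 2) ^ 4 * 4) = 64 * (k n : ℝ) ^ 8 := by ring
      rw [h2]
      exact mul_le_mul_of_nonneg_right h1 (by positivity)
    have hBeq : (2 * (n : ℝ) * 4) * (64 * (k n : ℝ) ^ 8) / ((c * (n : ℝ)) ^ 2)
        = (512 / c ^ 2) * ((k n : ℝ) ^ 8 / (n : ℝ)) := by
      field_simp
      ring
    have hK812 : (k n : ℝ) ^ 8 / (n : ℝ) ≤ (k n : ℝ) ^ 12 / (n : ℝ) := by
      have hpow : (k n : ℝ) ^ 8 ≤ (k n : ℝ) ^ 12 := pow_le_pow_right₀ hK1 (by norm_num)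
      exact (div_le_div_iff_of_pos_right hNpos).2 hpow
    have h12 : (((n : ℝ)) ^ ((1 : ℝ) / 12)) ^ (12 : ℕ) = (n : ℝ) := by
      rw [← Real.rpow_natCast (((n : ℝ)) ^ ((1 : ℝ) / 12)) 12,
        ← Real.rpow_mul hNpos.le]
      norm_num
    have hfrac : ((k n : ℝ) / ((n : ℝ)) ^ ((1 : ℝ) / 12)) ^ (12 : ℕ)
        = (k n : ℝ) ^ 12 / (n : ℝ) := by
      rw [div_pow, h12]
    have hεn : ε n =
        8 * (((n : ℝ) + 1) ^ 2 * (((k n : ℝ) * (k n : ℝ) * 2) ^ 6 * 8) / (q n : ℝ) ^ 3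
          + ((n : ℝ) + 1) * 4 * (((k n : ℝ) * (k n : ℝ) * 2) ^ 4 * 4) / (q n : ℝ) ^ 2) := by
      rw [hε]
    rw [hεn, hfrac, hM]
    have hA' := hA.trans (le_of_eq hAeq)
    have hB' := (hB.trans (le_of_eq hBeq)).trans
      (mul_le_mul_of_nonneg_left hK812 (by positivity))
    have hKN : (0:ℝ) ≤ (k n : ℝ) ^ 12 / (n : ℝ) := by positivity
    nlinarith [hA', hB', hKN]
  have hε0 : Tendsto ε atTop (nhds 0) := by
    refine squeeze_zero' (Filter.Eventually.of_forall fun n => ?_) hεle ?_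
    · rw [hε]
      positivity
    · have := (hko.pow 12).const_mul M
      simpa using this
  -- per-n probability bounds
  have hbounds : ∀ᶠ n : ℕ in atTop,
      (1 - ε n ≤ puzzleProb (n := n) (ι n) (EV (n := n) (ι n) (k n))) ∧
      (puzzleProb (n := n) (ι n) (EV (n := n) (ι n) (k n)) ≤ 1) := by
    filter_upwards [hev1] with n hn
    have hq1 : 0 < q n := by
      have h1 : (1 : ℝ) ≤ (q n : ℝ) := le_trans hn (hq n)
      have h2 : (1 : ℕ) ≤ q n := by exact_mod_cast h1
      omega
    obtain ⟨ω₀, hω₀⟩ := valid_exists (hι n) hq1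
    have hVpos : 0 < (Finset.univ.filter fun ω : Carving n (q n) =>
        IsValidCarving (ι n) ω).card :=
      Finset.card_pos.2 ⟨ω₀, Finset.mem_filter.2 ⟨Finset.mem_univ _, hω₀⟩⟩
    have hVposR : (0 : ℝ) < ((Finset.univ.filter fun ω : Carving n (q n) =>
        IsValidCarving (ι n) ω).card : ℝ) := by exact_mod_cast hVpos
    have hsplit : (Finset.univ.filter fun ω : Carving n (q n) =>
          IsValidCarving (ι n) ω ∧ EV (ι n) (k n) ω).card
        + (Finset.univ.filter fun ω : Carving n (q n) =>
          IsValidCarving (ι n) ω ∧ ¬ EV (ι n) (k n) ω).card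
        = (Finset.univ.filter fun ω : Carving n (q n) =>
          IsValidCarving (ι n) ω).card := by
      rw [← Finset.filter_filter (fun ω : Carving n (q n) => IsValidCarving (ι n) ω)
          (fun ω => EV (ι n) (k n) ω),
        ← Finset.filter_filter (fun ω : Carving n (q n) => IsValidCarving (ι n) ω)
          (fun ω => ¬ EV (ι n) (k n) ω)]
      exact Finset.card_filter_add_card_filter_not _
    have hbadE := cardE_bound (n := n) (ι n) (k n)
    have hbadW := notW_bound (n := n) (hι n) (k n) hq1
    have hεn : ε n = 8 *
        (((n : ℝ) + 1) ^ 2 * (((k n : ℝ) * (k n : ℝ) * 2) ^ 6 * 8) / (q n : ℝ) ^ 3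
          + ((n : ℝ) + 1) * 4 * (((k n : ℝ) * (k n : ℝ) * 2) ^ 4 * 4) / (q n : ℝ) ^ 2) := by
      rw [hε]
    have hkey : ((Finset.univ.filter fun ω : Carving n (q n) =>
        IsValidCarving (ι n) ω ∧ ¬ EV (ι n) (k n) ω).card : ℝ)
        ≤ ε n * ((Finset.univ.filter fun ω : Carving n (q n) =>
          IsValidCarving (ι n) ω).card : ℝ) := by
      have h8 : ((Finset.univ.filter fun ω : Carving n (q n) =>
          IsValidCarving (ι n) ω ∧ ¬ EV (ι n) (k n) ω).card : ℝ)
          ≤ 8 * ((Finset.univ.filter fun ω : Carving n (q n) =>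
            IsValidCarving (ι n) ω ∧ ¬ Wgood (ι n) (k n) ω).card : ℝ) := by
        exact_mod_cast hbadE
      refine h8.trans ?_
      rw [hεn]
      linarith [hbadW]
    constructor
    · rw [puzzleProb]
      rw [le_div_iff₀ hVposR]
      have hnumR : ((Finset.univ.filter fun ω : Carving n (q n) =>
          IsValidCarving (ι n) ω ∧ EV (ι n) (k n) ω).card : ℝ)
          = ((Finset.univ.filter fun ω : Carving n (q n) =>
            IsValidCarving (ι n) ω).card : ℝ)
          - ((Finset.univ.filter fun ω : Carving n (q n) =>
            IsValidCarving (ι n) ω ∧ ¬ EV (ι n) (k n) ω).card : ℝ) := by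
        have := hsplit
        have h' : ((Finset.univ.filter fun ω : Carving n (q n) =>
            IsValidCarving (ι n) ω ∧ EV (ι n) (k n) ω).card : ℝ)
            + ((Finset.univ.filter fun ω : Carving n (q n) =>
            IsValidCarving (ι n) ω ∧ ¬ EV (ι n) (k n) ω).card : ℝ)
            = ((Finset.univ.filter fun ω : Carving n (q n) =>
            IsValidCarving (ι n) ω).card : ℝ) := by exact_mod_cast this
        linarith
      rw [hnumR]
      nlinarith [hkey, hVposR]
    · rw [puzzleProb]
      rw [div_le_one hVposR]
      have hsub : (Finset.univ.filter fun ω : Carving n (q n) =>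
          IsValidCarving (ι n) ω ∧ EV (ι n) (k n) ω)
          ⊆ (Finset.univ.filter fun ω : Carving n (q n) => IsValidCarving (ι n) ω) :=
        fun ω h => Finset.mem_filter.2 ⟨Finset.mem_univ _, (Finset.mem_filter.1 h).2.1⟩
      exact_mod_cast Finset.card_le_card hsub
  refine tendsto_of_tendsto_of_tendsto_of_le_of_le'
    (g := fun n => 1 - ε n) (h := fun _ => (1 : ℝ)) ?_ ?_ ?_ ?_
  · have : Tendsto (fun n => 1 - ε n) atTop (nhds (1 - 0)) :=
      tendsto_const_nhds.sub hε0
    simpa using this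
  · exact tendsto_const_nhds
  · exact hbounds.mono fun n hn => hn.1
  · exact hbounds.mono fun n hn => hn.2
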